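/- arXiv:2306.15648 — 4 statements merged into one kernel-verified Lean document; each statement's English description precedes it below -/
import Mathlib

section
/- There is a constant c_d > 0 depending only on d such that: if K ⊆ ℝ^d is a convex body, ε > 0, and K has width at least ε in every direction, then the (d−1)-dimensional Hausdorff measure of the graph {(y, f_K(y)) : y ∈ K↓⊕2ε} is at most c_d · area(K). That is, the surface area of the lower boundary of the restricted support set K^{(2ε)} is at most a constant times the surface area of K. -/
open MeasureTheory Metric Set
open scoped RealInnerProductSpace ENNReal

noncomputable section

/-- Vertical projection `ℝ^d = ℝ^{d-1} × ℝ → ℝ^{d-1}` (forget the last coordinate). -/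
def vproj (n : ℕ) (x : EuclideanSpace ℝ (Fin (n + 1))) : EuclideanSpace ℝ (Fin n) :=
  WithLp.toLp 2 (fun j : Fin n => x j.castSucc)

/-- Lift `y ∈ ℝ^{d-1}` and `t ∈ ℝ` to the point `(y, t) ∈ ℝ^d`. -/
def vlift (n : ℕ) (y : EuclideanSpace ℝ (Fin n)) (t : ℝ) : EuclideanSpace ℝ (Fin (n + 1)) :=
  WithLp.toLp 2 (fun i : Fin (n + 1) => if h : (i : ℕ) < n then y ⟨i, h⟩ else t)

/-- The last standard basis vector `e_d` of `ℝ^d`. -/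
def ed (n : ℕ) : EuclideanSpace ℝ (Fin (n + 1)) := EuclideanSpace.single (Fin.last n) 1

/-- Support function of a set. -/
def suppFn {d : ℕ} (K : Set (EuclideanSpace ℝ (Fin d)))
    (u : EuclideanSpace ℝ (Fin d)) : ℝ :=
  sSup ((fun x => ⟪u, x⟫) '' K)

/-- Unit vectors `u` with `-u_d ≥ |u_j|` for all `j ≤ d-1` (downward-dominated directions). -/
def downDirs (n : ℕ) : Set (EuclideanSpace ℝ (Fin (n + 1))) :=
  {u | ‖u‖ = 1 ∧ ∀ j : Fin n, |u j.castSucc| ≤ -u (Fin.last n)}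

/-- The (downward) support set `S(K)`: intersection of the supporting halfspaces of `K`
with downward-dominated normals. -/
def SK {n : ℕ} (K : Set (EuclideanSpace ℝ (Fin (n + 1)))) :
    Set (EuclideanSpace ℝ (Fin (n + 1))) :=
  ⋂ u ∈ downDirs n, {x | ⟪u, x⟫ ≤ suppFn K u}

/-- The convex function whose graph is the lower boundary of `S(K)`. -/
def fK {n : ℕ} (K : Set (EuclideanSpace ℝ (Fin (n + 1)))) (y : EuclideanSpace ℝ (Fin n)) : ℝ :=
  sInf {t : ℝ | vlift n y t ∈ SK K}

/-- `K↓ ⊕ α`: points of `ℝ^{d-1}` within distance `α` of the vertical projection of `K`. -/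
def Koplus {n : ℕ} (K : Set (EuclideanSpace ℝ (Fin (n + 1)))) (α : ℝ) :
    Set (EuclideanSpace ℝ (Fin n)) :=
  {y | Metric.infDist y (vproj n '' K) ≤ α}

/-- The `α`-restricted support set `K^{(α)}`. -/
def Krestr {n : ℕ} (K : Set (EuclideanSpace ℝ (Fin (n + 1)))) (α : ℝ) :
    Set (EuclideanSpace ℝ (Fin (n + 1))) :=
  SK K ∩ {x | vproj n x ∈ Koplus K α}

/-- The lower boundary `∂̄K^{(α)}` of the restricted support set. -/
def lowerBdry {n : ℕ} (K : Set (EuclideanSpace ℝ (Fin (n + 1)))) (α : ℝ) :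
    Set (EuclideanSpace ℝ (Fin (n + 1))) :=
  (fun y => vlift n y (fK K y)) '' Koplus K α

/-- The base of the `ε`-dual cap of `K^{(2ε)}` induced by the point `q` and
outward normal `u`. -/
def DBase {n : ℕ} (K : Set (EuclideanSpace ℝ (Fin (n + 1)))) (ε : ℝ)
    (q u : EuclideanSpace ℝ (Fin (n + 1))) : Set (EuclideanSpace ℝ (Fin (n + 1))) :=
  {x | ⟪u, x - q⟫ = 0} ∩ closure (convexHull ℝ (Krestr K (2 * ε) ∪ {q - ε • ed n}))

/-- The projective dual of a U-shaped closed convex set. -/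
def Udual {n : ℕ} (U : Set (EuclideanSpace ℝ (Fin (n + 1)))) :
    Set (EuclideanSpace ℝ (Fin (n + 1))) :=
  {y | ∀ z ∈ U, ⟪vproj n y, vproj n z⟫ - z (Fin.last n) ≤ y (Fin.last n)}






open MeasureTheory Metric Set
open scoped RealInnerProductSpace ENNReal

noncomputable section
namespace Aux

variable {n : ℕ}

lemma vlift_castSucc (y : EuclideanSpace ℝ (Fin n)) (t : ℝ) (j : Fin n) :
    vlift n y t j.castSucc = y j := by
  simp only [vlift, Fin.coe_castSucc, j.isLt, dif_pos]

lemma vlift_last (y : EuclideanSpace ℝ (Fin n)) (t : ℝ) :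
    vlift n y t (Fin.last n) = t := by
  simp [vlift]

lemma vproj_vlift (y : EuclideanSpace ℝ (Fin n)) (t : ℝ) : vproj n (vlift n y t) = y :=
  by ext j; exact vlift_castSucc y t j

lemma vlift_vproj (x : EuclideanSpace ℝ (Fin (n + 1))) :
    vlift n (vproj n x) (x (Fin.last n)) = x := by
  ext i
  by_cases h : (i : ℕ) < n
  · simp only [vlift, dif_pos h, vproj]
    exact congrArg x (Fin.ext rfl)
  · have hi : i = Fin.last n := Fin.ext (by
      have := i.isLt; simp only [Fin.val_last]; omega)
    rw [hi]
    simp [vlift]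

lemma inner_eq_sum (x y : EuclideanSpace ℝ (Fin n)) : ⟪x, y⟫ = ∑ i, x i * y i := by
  rw [PiLp.inner_apply]; simp [RCLike.inner_apply]; exact Finset.sum_congr rfl fun _ _ => mul_comm _ _

lemma inner_vlift (u : EuclideanSpace ℝ (Fin (n + 1))) (y : EuclideanSpace ℝ (Fin n)) (t : ℝ) :
    ⟪u, vlift n y t⟫ = ⟪vproj n u, y⟫ + u (Fin.last n) * t := by
  rw [inner_eq_sum, inner_eq_sum, Fin.sum_univ_castSucc]
  simp only [vlift_castSucc, vlift_last, vproj]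

lemma dist_vlift (y y' : EuclideanSpace ℝ (Fin n)) (t t' : ℝ) :
    dist (vlift n y t) (vlift n y' t') = Real.sqrt (dist y y' ^ 2 + (t - t') ^ 2) := by
  rw [EuclideanSpace.dist_eq, EuclideanSpace.dist_eq]
  congr 1
  rw [Fin.sum_univ_castSucc]
  simp only [vlift_castSucc, vlift_last, Real.dist_eq, sq_abs]
  rw [Real.sq_sqrt (by positivity)]

lemma lipschitz_vproj : LipschitzWith 1 (vproj n) := by
  apply LipschitzWith.of_dist_le_mul
  intro x y
  simp only [NNReal.coe_one, one_mul]
  rw [EuclideanSpace.dist_eq, EuclideanSpace.dist_eq]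
  apply Real.sqrt_le_sqrt
  rw [Fin.sum_univ_castSucc]
  have : (0:ℝ) ≤ dist (x (Fin.last n)) (y (Fin.last n)) ^ 2 := sq_nonneg _
  simp only [vproj]
  linarith

lemma norm_sq_split (u : EuclideanSpace ℝ (Fin (n + 1))) :
    ‖u‖ ^ 2 = ‖vproj n u‖ ^ 2 + u (Fin.last n) ^ 2 := by
  rw [EuclideanSpace.norm_eq, EuclideanSpace.norm_eq,
    Real.sq_sqrt (by positivity), Real.sq_sqrt (by positivity), Fin.sum_univ_castSucc]
  simp [vproj, sq_abs]

end Aux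
end

noncomputable section
namespace Aux

variable {n : ℕ}

lemma neg_vlift (v : EuclideanSpace ℝ (Fin n)) : -vlift n v 0 = vlift n (-v) 0 := by
  ext i
  by_cases h : (i : ℕ) < n <;> simp [vlift, h]

lemma ed_apply (i : Fin (n + 1)) : ed n i = if i = Fin.last n then 1 else 0 :=
  EuclideanSpace.single_apply _ _ _

lemma norm_ed : ‖ed n‖ = 1 := by
  rw [ed, EuclideanSpace.norm_single]; norm_num

lemma neg_ed_mem : -ed n ∈ downDirs n := by
  constructor
  · rw [norm_neg, norm_ed]
  · intro j
    have h1 : ed n j.castSucc = 0 := by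
      rw [ed_apply, if_neg (Fin.castSucc_lt_last j).ne]
    have h2 : ed n (Fin.last n) = 1 := by rw [ed_apply, if_pos rfl]
    have e1 : (-ed n) j.castSucc = 0 := by simp [h1]
    have e2 : (-ed n) (Fin.last n) = -1 := by simp [h2]
    rw [e1, e2]; norm_num

lemma vproj_neg_ed : vproj n (-ed n) = 0 := by
  ext j
  have h1 : ed n j.castSucc = 0 := by
    rw [ed_apply, if_neg (Fin.castSucc_lt_last j).ne]
  simp [vproj, h1]

lemma last_nonpos {u : EuclideanSpace ℝ (Fin (n + 1))} (hn : 1 ≤ n) (hu : u ∈ downDirs n) :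
    u (Fin.last n) ≤ 0 :=
  neg_nonneg.mp ((abs_nonneg _).trans (hu.2 ⟨0, hn⟩))

lemma vproj_norm_le {u : EuclideanSpace ℝ (Fin (n + 1))} (hn : 1 ≤ n) (hu : u ∈ downDirs n) :
    ‖vproj n u‖ ≤ Real.sqrt n * (-u (Fin.last n)) := by
  have hl : u (Fin.last n) ≤ 0 := last_nonpos hn hu
  have hr : (0:ℝ) ≤ Real.sqrt n * (-u (Fin.last n)) :=
    mul_nonneg (Real.sqrt_nonneg _) (by linarith)
  have h2 : ‖vproj n u‖ ^ 2 ≤ (Real.sqrt n * (-u (Fin.last n))) ^ 2 := by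
    rw [EuclideanSpace.norm_eq, Real.sq_sqrt (by positivity), mul_pow,
      Real.sq_sqrt (Nat.cast_nonneg n), neg_pow]
    have hb : ∀ j : Fin n, ‖vproj n u j‖ ^ 2 ≤ u (Fin.last n) ^ 2 := by
      intro j
      have := hu.2 j
      have h0 : |u j.castSucc| ^ 2 ≤ (-u (Fin.last n)) ^ 2 :=
        pow_le_pow_left₀ (abs_nonneg _) this 2
      simpa [vproj, Real.norm_eq_abs, sq_abs] using h0
    calc ∑ j : Fin n, ‖vproj n u j‖ ^ 2 ≤ ∑ _j : Fin n, u (Fin.last n) ^ 2 :=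
          Finset.sum_le_sum fun j _ => hb j
      _ = (n : ℝ) * u (Fin.last n) ^ 2 := by
          rw [Finset.sum_const, Finset.card_univ, Fintype.card_fin, nsmul_eq_mul]
      _ = (n : ℝ) * ((-1) ^ 2 * u (Fin.last n) ^ 2) := by ring
  calc ‖vproj n u‖ = Real.sqrt (‖vproj n u‖ ^ 2) := (Real.sqrt_sq (norm_nonneg _)).symm
    _ ≤ Real.sqrt ((Real.sqrt n * (-u (Fin.last n))) ^ 2) := Real.sqrt_le_sqrt h2
    _ = Real.sqrt n * (-u (Fin.last n)) := Real.sqrt_sq hr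

section supp
variable {d : ℕ} {A : Set (EuclideanSpace ℝ (Fin d))}

lemma le_suppFn (hA : IsCompact A) {x : EuclideanSpace ℝ (Fin d)} (hx : x ∈ A)
    (u : EuclideanSpace ℝ (Fin d)) : ⟪u, x⟫ ≤ suppFn A u :=
  le_csSup (hA.image (continuous_const.inner continuous_id)).bddAbove ⟨x, hx, rfl⟩

lemma suppFn_le (hne : A.Nonempty) {u : EuclideanSpace ℝ (Fin d)} {b : ℝ}
    (h : ∀ x ∈ A, ⟪u, x⟫ ≤ b) : suppFn A u ≤ b :=
  csSup_le (hne.image _) (by rintro _ ⟨x, hx, rfl⟩; exact h x hx)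

lemma exists_suppFn_eq (hA : IsCompact A) (hne : A.Nonempty) (u : EuclideanSpace ℝ (Fin d)) :
    ∃ x ∈ A, ⟪u, x⟫ = suppFn A u := by
  obtain ⟨x, hx, hmax⟩ :=
    hA.exists_isMaxOn (f := fun x => (⟪u, x⟫ : ℝ)) hne
      ((continuous_const.inner continuous_id).continuousOn)
  exact ⟨x, hx, le_antisymm (le_suppFn hA hx u) (suppFn_le hne fun z hz => hmax hz)⟩

end supp

lemma mem_SK_iff {K : Set (EuclideanSpace ℝ (Fin (n + 1)))} {x : EuclideanSpace ℝ (Fin (n + 1))} :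
    x ∈ SK K ↔ ∀ u ∈ downDirs n, ⟪u, x⟫ ≤ suppFn K u := by
  simp [SK]

lemma K_subset_SK {K : Set (EuclideanSpace ℝ (Fin (n + 1)))} (hK : IsCompact K) : K ⊆ SK K :=
  fun _x hx => mem_SK_iff.mpr fun u _ => le_suppFn hK hx u

lemma shift_mem_SK (hn : 1 ≤ n) {K : Set (EuclideanSpace ℝ (Fin (n + 1)))}
    {y y' : EuclideanSpace ℝ (Fin n)} {t : ℝ} (h : vlift n y t ∈ SK K) :
    vlift n y' (t + Real.sqrt n * dist y y') ∈ SK K := by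
  rw [mem_SK_iff] at h ⊢
  intro u hu
  have h1 := h u hu
  rw [inner_vlift] at h1 ⊢
  have hC : ⟪vproj n u, y'⟫ - ⟪vproj n u, y⟫ ≤ ‖vproj n u‖ * dist y y' := by
    have e : ⟪vproj n u, y'⟫ - ⟪vproj n u, y⟫ = ⟪vproj n u, y' - y⟫ := by
      rw [inner_sub_right]
    rw [e, dist_eq_norm, ← norm_sub_rev y' y]
    exact real_inner_le_norm _ _
  have hup := vproj_norm_le hn hu
  have hd : (0:ℝ) ≤ dist y y' := dist_nonneg
  nlinarith

def Tset (K : Set (EuclideanSpace ℝ (Fin (n + 1)))) (y : EuclideanSpace ℝ (Fin n)) : Set ℝ :=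
  {t : ℝ | vlift n y t ∈ SK K}

lemma Tset_nonempty (hn : 1 ≤ n) {K : Set (EuclideanSpace ℝ (Fin (n + 1)))}
    (hK : IsCompact K) (hne : K.Nonempty) (y : EuclideanSpace ℝ (Fin n)) :
    (Tset K y).Nonempty := by
  obtain ⟨x, hx⟩ := hne
  have hx' : vlift n (vproj n x) (x (Fin.last n)) ∈ SK K := by
    rw [vlift_vproj]; exact K_subset_SK hK hx
  exact ⟨_, shift_mem_SK hn hx'⟩

lemma Tset_bddBelow {K : Set (EuclideanSpace ℝ (Fin (n + 1)))}
    (y : EuclideanSpace ℝ (Fin n)) : BddBelow (Tset K y) := by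
  refine ⟨-suppFn K (-ed n), fun t ht => ?_⟩
  have h2 := (mem_SK_iff.mp ht) (-ed n) neg_ed_mem
  rw [inner_vlift, vproj_neg_ed, inner_zero_left] at h2
  have e2 : (-ed n) (Fin.last n) = -1 := by
    have : ed n (Fin.last n) = 1 := by rw [ed_apply, if_pos rfl]
    simp [this]
  rw [e2] at h2
  linarith

lemma fK_mem_Tset (hn : 1 ≤ n) {K : Set (EuclideanSpace ℝ (Fin (n + 1)))}
    (hK : IsCompact K) (hne : K.Nonempty) (y : EuclideanSpace ℝ (Fin n)) :
    fK K y ∈ Tset K y := by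
  have hcl : IsClosed (Tset K y) := by
    have hSK : IsClosed (SK K) := by
      apply isClosed_biInter
      intro u _
      have : {x : EuclideanSpace ℝ (Fin (n+1)) | ⟪u, x⟫ ≤ suppFn K u}
          = (fun x : EuclideanSpace ℝ (Fin (n+1)) => ⟪u, x⟫) ⁻¹' Set.Iic (suppFn K u) := rfl
      rw [this]
      exact IsClosed.preimage (continuous_const.inner continuous_id) isClosed_Iic
    have hc : Continuous fun t : ℝ => vlift n y t := by
      have : (fun t : ℝ => vlift n y t) = fun t => vlift n y 0 + t • ed n := by
        funext t; ext i
        by_cases h : (i : ℕ) < n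
        · have : i ≠ Fin.last n := by
            intro he; rw [he] at h; simp at h
          simp [vlift, h, ed_apply, this]
        · have hi : i = Fin.last n := Fin.ext (by have := i.isLt; simp only [Fin.val_last]; omega)
          simp [vlift, h, hi, ed_apply]
      rw [this]
      exact continuous_const.add (continuous_id.smul continuous_const)
    exact hSK.preimage hc
  exact hcl.csInf_mem (Tset_nonempty hn hK hne y) (Tset_bddBelow y)

lemma fK_lip (hn : 1 ≤ n) {K : Set (EuclideanSpace ℝ (Fin (n + 1)))}
    (hK : IsCompact K) (hne : K.Nonempty) (y y' : EuclideanSpace ℝ (Fin n)) :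
    fK K y' ≤ fK K y + Real.sqrt n * dist y y' := by
  have h1 : ∀ t ∈ Tset K y, fK K y' ≤ t + Real.sqrt n * dist y y' := fun t ht =>
    csInf_le (Tset_bddBelow y') (shift_mem_SK hn ht)
  have h2 : fK K y' - Real.sqrt n * dist y y' ≤ fK K y :=
    le_csInf (Tset_nonempty hn hK hne y) fun t ht => by linarith [h1 t ht]
  linarith

lemma graph_lipschitz (hn : 1 ≤ n) {K : Set (EuclideanSpace ℝ (Fin (n + 1)))}
    (hK : IsCompact K) (hne : K.Nonempty) :
    LipschitzWith (Real.toNNReal (Real.sqrt (n + 1))) (fun y => vlift n y (fK K y)) := by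
  apply LipschitzWith.of_dist_le_mul
  intro y y'
  rw [dist_vlift]
  have hd : (0:ℝ) ≤ dist y y' := dist_nonneg
  have hf : |fK K y - fK K y'| ≤ Real.sqrt n * dist y y' := by
    rw [abs_le]
    constructor
    · have := fK_lip hn hK hne y y'
      linarith
    · have := fK_lip hn hK hne y' y
      rw [dist_comm y' y] at this
      linarith
  have hsq : (0:ℝ) ≤ Real.sqrt n := Real.sqrt_nonneg _
  have hn0 : ((n:ℝ)) = Real.sqrt n ^ 2 := (Real.sq_sqrt (Nat.cast_nonneg n)).symm
  have h1 : dist y y' ^ 2 + (fK K y - fK K y') ^ 2 ≤ ((n:ℝ) + 1) * dist y y' ^ 2 := by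
    have h0 : (fK K y - fK K y') ^ 2 ≤ (Real.sqrt n * dist y y') ^ 2 := by
      rw [← sq_abs]
      exact pow_le_pow_left₀ (abs_nonneg _) hf 2
    nlinarith
  calc Real.sqrt (dist y y' ^ 2 + (fK K y - fK K y') ^ 2)
      ≤ Real.sqrt (((n:ℝ) + 1) * dist y y' ^ 2) := Real.sqrt_le_sqrt h1
    _ = Real.sqrt ((n:ℝ) + 1) * dist y y' := by
        rw [Real.sqrt_mul (by positivity), Real.sqrt_sq hd]
    _ = (Real.toNNReal (Real.sqrt ((n:ℝ) + 1)) : ℝ) * dist y y' := by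
        rw [Real.coe_toNNReal _ (Real.sqrt_nonneg _)]
    _ ≤ _ := le_refl _

end Aux
end

noncomputable section
namespace Aux

variable {n : ℕ}

lemma continuous_vlift (y : EuclideanSpace ℝ (Fin n)) : Continuous fun t : ℝ => vlift n y t := by
  have : (fun t : ℝ => vlift n y t) = fun t => vlift n y 0 + t • ed n := by
    funext t; ext i
    by_cases h : (i : ℕ) < n
    · have hne : i ≠ Fin.last n := by
        intro he; rw [he] at h; simp at h
      simp [vlift, h, ed_apply, hne]
    · have hi : i = Fin.last n := Fin.ext (by have := i.isLt; simp only [Fin.val_last]; omega)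
      simp [vlift, h, hi, ed_apply]
  rw [this]
  exact continuous_const.add (continuous_id.smul continuous_const)

lemma abs_coord_le_norm {m : ℕ} (x : EuclideanSpace ℝ (Fin m)) (i : Fin m) : |x i| ≤ ‖x‖ := by
  have h1 : |x i| ^ 2 ≤ ∑ j, ‖x j‖ ^ 2 := by
    have := Finset.single_le_sum (f := fun j => ‖x j‖ ^ 2)
      (fun j _ => sq_nonneg _) (Finset.mem_univ i)
    simpa [Real.norm_eq_abs] using this
  calc |x i| = Real.sqrt (|x i| ^ 2) := (Real.sqrt_sq (abs_nonneg _)).symm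
    _ ≤ Real.sqrt (∑ j, ‖x j‖ ^ 2) := Real.sqrt_le_sqrt h1
    _ = ‖x‖ := (EuclideanSpace.norm_eq x).symm

lemma measure_proj_le_frontier {K : Set (EuclideanSpace ℝ (Fin (n + 1)))}
    (hK : IsCompact K) (hne : K.Nonempty) :
    μH[(n:ℝ)] (vproj n '' K) ≤ μH[(n:ℝ)] (frontier K) := by
  classical
  set g : EuclideanSpace ℝ (Fin n) → ℝ := fun y => sInf {t | vlift n y t ∈ K} with hg
  obtain ⟨R, hR⟩ := hK.isBounded.subset_closedBall 0
  have hfib : ∀ y ∈ vproj n '' K, vlift n y (g y) ∈ K := by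
    rintro y ⟨x, hx, rfl⟩
    have hTne : ({t | vlift n (vproj n x) t ∈ K} : Set ℝ).Nonempty :=
      ⟨x (Fin.last n), by rw [Set.mem_setOf_eq, vlift_vproj]; exact hx⟩
    have hTcl : IsClosed {t | vlift n (vproj n x) t ∈ K} :=
      hK.isClosed.preimage (continuous_vlift _)
    have hTbdd : BddBelow {t | vlift n (vproj n x) t ∈ K} := by
      refine ⟨-R, fun t ht => ?_⟩
      have h1 : ‖vlift n (vproj n x) t‖ ≤ R := by
        have := hR ht
        rwa [Metric.mem_closedBall, dist_zero_right] at this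
      have h2 : |t| ≤ R := by
        have := abs_coord_le_norm (vlift n (vproj n x) t) (Fin.last n)
        rw [vlift_last] at this
        linarith
      have := abs_le.mp h2
      linarith [this.1]
    exact hTcl.csInf_mem hTne hTbdd
  have hfro : ∀ y ∈ vproj n '' K, vlift n y (g y) ∈ frontier K := by
    intro y hy
    rw [frontier_eq_closure_inter_closure, hK.isClosed.closure_eq]
    refine ⟨hfib y hy, ?_⟩
    rw [_root_.mem_closure_iff]
    intro o ho hmem
    obtain ⟨δ, hδ, hball⟩ := Metric.isOpen_iff.mp ho _ hmem
    refine ⟨vlift n y (g y - δ/2), hball ?_, fun hmemK => ?_⟩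
    · rw [Metric.mem_ball, dist_vlift]
      simp only [dist_self]
      rw [show (0:ℝ)^2 + (g y - δ/2 - g y)^2 = (δ/2)^2 by ring, Real.sqrt_sq (by linarith)]
      linarith
    · -- g y - δ/2 ∈ fiber contradicts sInf
      obtain ⟨x, hx, rfl⟩ := hy
      have hTbdd : BddBelow {t | vlift n (vproj n x) t ∈ K} := by
        refine ⟨-R, fun t ht => ?_⟩
        have h1 : ‖vlift n (vproj n x) t‖ ≤ R := by
          have := hR ht
          rwa [Metric.mem_closedBall, dist_zero_right] at this
        have h2 : |t| ≤ R := by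
          have := abs_coord_le_norm (vlift n (vproj n x) t) (Fin.last n)
          rw [vlift_last] at this
          linarith
        linarith [(abs_le.mp h2).1]
      have hle : g (vproj n x) ≤ g (vproj n x) - δ/2 := csInf_le hTbdd hmemK
      linarith
  set G : Set (EuclideanSpace ℝ (Fin (n + 1))) :=
    (fun y => vlift n y (g y)) '' (vproj n '' K) with hGdef
  have hGsub : G ⊆ frontier K := by
    rintro _ ⟨y, hy, rfl⟩; exact hfro y hy
  have himg : vproj n '' G = vproj n '' K := by
    rw [hGdef, Set.image_image]
    have : ∀ y ∈ vproj n '' K, vproj n (vlift n y (g y)) = y := fun y _ => vproj_vlift _ _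
    rw [Set.image_congr this, Set.image_id']
  calc μH[(n:ℝ)] (vproj n '' K) = μH[(n:ℝ)] (vproj n '' G) := by rw [himg]
    _ ≤ (1 : ℝ≥0∞) ^ (n:ℝ) * μH[(n:ℝ)] G := by
        have := lipschitz_vproj (n := n)
        simpa using this.hausdorffMeasure_image_le (by positivity) G
    _ = μH[(n:ℝ)] G := by rw [ENNReal.one_rpow, one_mul]
    _ ≤ μH[(n:ℝ)] (frontier K) := measure_mono hGsub

end Aux
end

noncomputable section
namespace Aux

open Module

variable {n : ℕ}

lemma exists_ball_subset (hn : 1 ≤ n) {P : Set (EuclideanSpace ℝ (Fin n))}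
    (hP : IsCompact P) (hPc : Convex ℝ P) (hPne : P.Nonempty) {ε : ℝ} (hε : 0 < ε)
    (hw : ∀ v : EuclideanSpace ℝ (Fin n), ‖v‖ = 1 → ε ≤ suppFn P v + suppFn P (-v)) :
    ∃ c, Metric.closedBall c (ε / (2 * (n + 1))) ⊆ P := by
  classical
  set r : ℝ := ε / (2 * (n + 1)) with hrdef
  have hr : 0 < r := by positivity
  set ι := {v : EuclideanSpace ℝ (Fin n) // ‖v‖ = 1} with hι
  have hmin : ∀ v : ι, ∃ x ∈ P, ⟪v.1, x⟫ = -suppFn P (-v.1) := by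
    intro v
    obtain ⟨x, hx, he⟩ := exists_suppFn_eq hP hPne (-v.1)
    refine ⟨x, hx, ?_⟩
    rw [← he, inner_neg_left]; ring
  choose xv hxvP hxv using hmin
  set C : ι → Set (EuclideanSpace ℝ (Fin n)) :=
    fun v => P ∩ {x | ⟪v.1, x⟫ ≤ suppFn P v.1 - r} with hC
  have hlin : ∀ v : EuclideanSpace ℝ (Fin n),
      IsLinearMap ℝ (fun x : EuclideanSpace ℝ (Fin n) => (⟪v, x⟫ : ℝ)) := fun v =>
    ⟨fun a b => inner_add_right _ _ _, fun c a => real_inner_smul_right _ _ _⟩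
  have hCconv : ∀ v : ι, Convex ℝ (C v) := fun v =>
    hPc.inter (convex_halfSpace_le (hlin v.1) _)
  have hCcomp : ∀ v : ι, IsCompact (C v) := fun v =>
    hP.inter_right (IsClosed.preimage (continuous_const.inner continuous_id)
      (isClosed_Iic (a := suppFn P v.1 - r)))
  have hinter : ∀ I : Finset ι, I.card ≤ finrank ℝ (EuclideanSpace ℝ (Fin n)) + 1 →
      (⋂ v ∈ I, C v).Nonempty := by
    intro I hIcard
    rcases I.eq_empty_or_nonempty with hI | hIne
    · subst hI; simp
    have hm0 : 0 < I.card := Finset.card_pos.mpr hIne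
    have hmn : (I.card : ℝ) ≤ (n : ℝ) + 1 := by
      rw [finrank_euclideanSpace_fin] at hIcard
      exact_mod_cast hIcard
    set m : ℝ := (I.card : ℝ) with hm
    have hmpos : (0:ℝ) < m := by rw [hm]; exact_mod_cast hm0
    set xstar : EuclideanSpace ℝ (Fin n) := m⁻¹ • ∑ v ∈ I, xv v with hxstar
    have hxstarP : xstar ∈ P := by
      rw [hxstar, Finset.smul_sum]
      refine hPc.sum_mem (fun v _ => by positivity) ?_ (fun v _ => hxvP v)
      rw [Finset.sum_const, nsmul_eq_mul, ← hm, mul_inv_cancel₀ hmpos.ne']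
    refine ⟨xstar, Set.mem_iInter₂.mpr fun v₀ hv₀ => ⟨hxstarP, ?_⟩⟩
    have hin : (⟪v₀.1, xstar⟫ : ℝ) = m⁻¹ * ∑ v ∈ I, ⟪v₀.1, xv v⟫ := by
      rw [hxstar, real_inner_smul_right, inner_sum]
    have hsum : ε ≤ ∑ v ∈ I, (suppFn P v₀.1 - ⟪v₀.1, xv v⟫) := by
      have h1 : suppFn P v₀.1 - ⟪v₀.1, xv v₀⟫ ≤ ∑ v ∈ I, (suppFn P v₀.1 - ⟪v₀.1, xv v⟫) :=
        Finset.single_le_sum (f := fun v => suppFn P v₀.1 - ⟪v₀.1, xv v⟫)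
          (fun v _ => sub_nonneg.mpr (le_suppFn hP (hxvP v) v₀.1)) hv₀
      have h2 : ε ≤ suppFn P v₀.1 - ⟪v₀.1, xv v₀⟫ := by
        rw [hxv v₀]
        have := hw v₀.1 v₀.2
        linarith
      linarith
    have hexp : suppFn P v₀.1 - ⟪v₀.1, xstar⟫
        = m⁻¹ * ∑ v ∈ I, (suppFn P v₀.1 - ⟪v₀.1, xv v⟫) := by
      rw [hin, Finset.sum_sub_distrib, Finset.sum_const, nsmul_eq_mul, ← hm, mul_sub,
        ← mul_assoc, inv_mul_cancel₀ hmpos.ne', one_mul]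
    have hge : r ≤ suppFn P v₀.1 - ⟪v₀.1, xstar⟫ := by
      rw [hexp]
      have h3 : ε / m ≤ m⁻¹ * ∑ v ∈ I, (suppFn P v₀.1 - ⟪v₀.1, xv v⟫) := by
        rw [div_eq_inv_mul]
        exact mul_le_mul_of_nonneg_left hsum (by positivity)
      have h4 : ε / ((n:ℝ) + 1) ≤ ε / m := by
        apply div_le_div_of_nonneg_left hε.le hmpos hmn
      have h5 : r ≤ ε / ((n:ℝ) + 1) := by
        rw [hrdef]
        rw [div_le_div_iff₀ (by positivity) (by positivity)]
        nlinarith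
      linarith
    rw [Set.mem_setOf_eq]
    linarith
  obtain ⟨c, hc⟩ := Convex.helly_theorem_compact' (𝕜 := ℝ) hCconv hCcomp hinter
  refine ⟨c, fun x hx => ?_⟩
  by_contra hxP
  obtain ⟨f, u, hfa, hfx⟩ := geometric_hahn_banach_closed_point hPc hP.isClosed hxP
  set w := (InnerProductSpace.toDual ℝ (EuclideanSpace ℝ (Fin n))).symm f with hwdef
  have hwz : ∀ z, (⟪w, z⟫ : ℝ) = f z := fun z => InnerProductSpace.toDual_symm_apply
  obtain ⟨z0, hz0⟩ := id hPne
  have hw0 : w ≠ 0 := by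
    intro h0
    have h1 : f z0 < u := hfa z0 hz0
    have h2 : (⟪w, z0⟫ : ℝ) = 0 := by rw [h0, inner_zero_left]
    have h3 : (⟪w, x⟫ : ℝ) = 0 := by rw [h0, inner_zero_left]
    rw [hwz] at h2 h3
    linarith
  have hwpos : 0 < ‖w‖ := norm_pos_iff.mpr hw0
  set v : ι := ⟨‖w‖⁻¹ • w, by
    rw [norm_smul, norm_inv, norm_norm, inv_mul_cancel₀ hwpos.ne']⟩ with hv
  have h1 : suppFn P v.1 ≤ ‖w‖⁻¹ * u := by
    apply suppFn_le hPne
    intro a ha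
    rw [real_inner_smul_left, hwz]
    exact mul_le_mul_of_nonneg_left (hfa a ha).le (by positivity)
  have h2 : ‖w‖⁻¹ * u < ⟪v.1, x⟫ := by
    rw [real_inner_smul_left, hwz]
    exact mul_lt_mul_of_pos_left hfx (by positivity)
  have hcv : (⟪v.1, c⟫ : ℝ) ≤ suppFn P v.1 - r := by
    have := Set.mem_iInter.mp hc v
    exact this.2
  have h3 : (⟪v.1, x⟫ : ℝ) ≤ ⟪v.1, c⟫ + r := by
    have e : (⟪v.1, x⟫ : ℝ) - ⟪v.1, c⟫ = ⟪v.1, x - c⟫ := by rw [inner_sub_right]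
    have hb : (⟪v.1, x - c⟫ : ℝ) ≤ ‖v.1‖ * ‖x - c‖ := real_inner_le_norm _ _
    have hxc : ‖x - c‖ ≤ r := by
      rw [← dist_eq_norm]
      exact Metric.mem_closedBall.mp hx
    rw [v.2, one_mul] at hb
    linarith
  linarith

end Aux
end


open MeasureTheory Metric Set
open scoped RealInnerProductSpace ENNReal NNReal

noncomputable section
namespace Aux2

variable {n : ℕ}

example (c : ℝ≥0) (x : ℝ≥0∞) : c • x = (c : ℝ≥0∞) * x := by
  simp [ENNReal.smul_def]

lemma vproj_islinear : IsLinearMap ℝ (vproj n) := by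
  constructor
  · intro x y; ext j; simp [vproj]
  · intro c x; ext j; simp [vproj]

lemma thick_subset_homothety {P : Set (EuclideanSpace ℝ (Fin n))} (hP : IsCompact P)
    (hPne : P.Nonempty) (hPc : Convex ℝ P) {c : EuclideanSpace ℝ (Fin n)} {a b : ℝ}
    (ha : 0 < a) (hb : 0 < b) (hball : Metric.closedBall c a ⊆ P) :
    {y | Metric.infDist y P ≤ b} ⊆ AffineMap.homothety c ((a + b)/a) '' P := by
  intro z hz
  obtain ⟨x, hxP, hdx⟩ := hP.exists_infDist_eq_dist hPne z
  have hzx : dist z x ≤ b := by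
    rw [← hdx]; exact hz
  set q : EuclideanSpace ℝ (Fin n) :=
    (a/(a+b)) • x + (b/(a+b)) • (c + (a/b) • (z - x)) with hq
  have hq2 : c + (a/b) • (z - x) ∈ P := by
    apply hball
    rw [Metric.mem_closedBall, dist_eq_norm]
    have : c + (a/b) • (z - x) - c = (a/b) • (z - x) := by abel
    rw [this, norm_smul]
    have h1 : ‖z - x‖ ≤ b := by rwa [← dist_eq_norm]
    have h2 : ‖(a/b : ℝ)‖ = a/b := by
      rw [Real.norm_eq_abs, abs_of_pos (by positivity)]
    rw [h2]
    calc a/b * ‖z - x‖ ≤ a/b * b := by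
          exact mul_le_mul_of_nonneg_left h1 (by positivity)
      _ = a := by field_simp
  have hqP : q ∈ P := by
    apply hPc hxP hq2 (by positivity) (by positivity)
    field_simp
  refine ⟨q, hqP, ?_⟩
  rw [AffineMap.homothety_apply, vsub_eq_sub, vadd_eq_add, hq]
  have hab : a + b ≠ 0 := by positivity
  match_scalars <;> field_simp <;> ring

end Aux2
end

noncomputable section
namespace Aux2

variable {n : ℕ}

lemma norm_vlift_zero (v : EuclideanSpace ℝ (Fin n)) : ‖vlift n v 0‖ = ‖v‖ := by
  have h := Aux.norm_sq_split (vlift n v 0)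
  rw [Aux.vproj_vlift, Aux.vlift_last] at h
  have h2 : ‖vlift n v 0‖ ^ 2 = ‖v‖ ^ 2 := by rw [h]; ring
  calc ‖vlift n v 0‖ = Real.sqrt (‖vlift n v 0‖ ^ 2) := (Real.sqrt_sq (norm_nonneg _)).symm
    _ = Real.sqrt (‖v‖ ^ 2) := by rw [h2]
    _ = ‖v‖ := Real.sqrt_sq (norm_nonneg _)

lemma suppFn_proj (K : Set (EuclideanSpace ℝ (Fin (n + 1)))) (v : EuclideanSpace ℝ (Fin n)) :
    suppFn (vproj n '' K) v = suppFn K (vlift n v 0) := by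
  unfold suppFn
  rw [Set.image_image]
  congr 1
  apply Set.image_congr
  intro x _
  have h : (⟪vlift n v 0, x⟫ : ℝ) = ⟪vproj n x, v⟫ + x (Fin.last n) * 0 := by
    rw [real_inner_comm]; exact Aux.inner_vlift x v 0
  rw [h, mul_zero, add_zero, real_inner_comm]

end Aux2
end

noncomputable section



/-- the surface area of the lower boundary of the restricted support set
`K^{(2ε)}` is at most a constant (depending only on the dimension) times the surface
area of `K`, provided `K` has width at least `ε` in every direction.
Here the dimension is `d = n + 1 ≥ 2`. -/
theorem area_of_restricted_support_set (n : ℕ) (hn : 1 ≤ n) :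
    ∃ c : ℝ, 0 < c ∧
      ∀ (K : Set (EuclideanSpace ℝ (Fin (n + 1)))),
        IsCompact K → Convex ℝ K → (interior K).Nonempty →
        ∀ ε : ℝ, 0 < ε →
        (∀ u : EuclideanSpace ℝ (Fin (n + 1)), ‖u‖ = 1 → ε ≤ suppFn K u + suppFn K (-u)) →
        μH[(n : ℝ)] ((fun y => vlift n y (fK K y)) '' Koplus K (2 * ε))
          ≤ ENNReal.ofReal c * μH[(n : ℝ)] (frontier K) := by
  refine ⟨Real.sqrt ((n:ℝ) + 1) ^ n * (4 * (n:ℝ) + 5) ^ n, by positivity, ?_⟩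
  intro K hKcomp hKconv hKint ε hε hwidth
  have hKne : K.Nonempty := hKint.mono interior_subset
  set P := vproj n '' K with hPdef
  have hPcomp : IsCompact P := hKcomp.image Aux.lipschitz_vproj.continuous
  have hPne : P.Nonempty := hKne.image _
  have hPconv : Convex ℝ P := hKconv.is_linear_image Aux2.vproj_islinear
  have hPw : ∀ v : EuclideanSpace ℝ (Fin n), ‖v‖ = 1 → ε ≤ suppFn P v + suppFn P (-v) := by
    intro v hv
    have h1 := hwidth (vlift n v 0) (by rw [Aux2.norm_vlift_zero, hv])
    rw [Aux.neg_vlift] at h1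
    rw [hPdef, Aux2.suppFn_proj, Aux2.suppFn_proj]
    exact h1
  obtain ⟨c₀, hball⟩ := Aux.exists_ball_subset hn hPcomp hPconv hPne hε hPw
  set a : ℝ := ε / (2 * ((n:ℝ) + 1)) with hadef
  have ha : 0 < a := by positivity
  have hratio : (a + 2 * ε) / a = 4 * (n:ℝ) + 5 := by
    rw [hadef]
    field_simp
    ring
  have hlam : ((4:ℝ) * n + 5) ≠ 0 := by positivity
  have hnd : (0:ℝ) ≤ (n:ℝ) := Nat.cast_nonneg n
  have hsub : Koplus K (2 * ε) ⊆ AffineMap.homothety c₀ (4 * (n:ℝ) + 5) '' P := by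
    rw [← hratio]
    exact Aux2.thick_subset_homothety hPcomp hPne hPconv ha (by linarith) hball
  have step1 : μH[(n : ℝ)] ((fun y => vlift n y (fK K y)) '' Koplus K (2 * ε))
      ≤ ((Real.toNNReal (Real.sqrt ((n:ℝ) + 1)) : ℝ≥0) : ℝ≥0∞) ^ (n:ℝ)
          * μH[(n : ℝ)] (Koplus K (2 * ε)) :=
    (Aux.graph_lipschitz hn hKcomp hKne).hausdorffMeasure_image_le hnd _
  have step2 : μH[(n : ℝ)] (Koplus K (2 * ε))
      ≤ ((‖(4 * (n:ℝ) + 5)‖₊ : ℝ≥0) : ℝ≥0∞) ^ (n:ℝ) * μH[(n : ℝ)] P := by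
    calc μH[(n : ℝ)] (Koplus K (2 * ε))
        ≤ μH[(n : ℝ)] (AffineMap.homothety c₀ (4 * (n:ℝ) + 5) '' P) := measure_mono hsub
      _ = ‖(4 * (n:ℝ) + 5)‖₊ ^ (n:ℝ) • μH[(n : ℝ)] P :=
          hausdorffMeasure_homothety_image hnd c₀ hlam P
      _ = _ := by rw [ENNReal.smul_def, smul_eq_mul]; norm_cast
  have step3 : μH[(n : ℝ)] P ≤ μH[(n : ℝ)] (frontier K) :=
    Aux.measure_proj_le_frontier hKcomp hKne
  have hAB : ((Real.toNNReal (Real.sqrt ((n:ℝ) + 1)) : ℝ≥0) : ℝ≥0∞) ^ (n:ℝ)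
      * ((‖(4 * (n:ℝ) + 5)‖₊ : ℝ≥0) : ℝ≥0∞) ^ (n:ℝ)
      ≤ ENNReal.ofReal (Real.sqrt ((n:ℝ) + 1) ^ n * (4 * (n:ℝ) + 5) ^ n) := by
    rw [ENNReal.rpow_natCast, ENNReal.rpow_natCast, ← ENNReal.coe_pow, ← ENNReal.coe_pow,
      ← ENNReal.coe_mul, ENNReal.ofReal]
    apply ENNReal.coe_le_coe.mpr
    apply le_of_eq
    apply NNReal.coe_injective
    push_cast
    rw [Real.coe_toNNReal _ (Real.sqrt_nonneg _),
      Real.coe_toNNReal _ (by positivity : (0:ℝ) ≤ Real.sqrt ((n:ℝ)+1) ^ n * (4*(n:ℝ)+5) ^ n)]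
    rw [Real.norm_eq_abs, abs_of_pos (by positivity)]
  calc μH[(n : ℝ)] ((fun y => vlift n y (fK K y)) '' Koplus K (2 * ε))
      ≤ ((Real.toNNReal (Real.sqrt ((n:ℝ) + 1)) : ℝ≥0) : ℝ≥0∞) ^ (n:ℝ)
          * μH[(n : ℝ)] (Koplus K (2 * ε)) := step1
    _ ≤ ((Real.toNNReal (Real.sqrt ((n:ℝ) + 1)) : ℝ≥0) : ℝ≥0∞) ^ (n:ℝ)
          * (((‖(4 * (n:ℝ) + 5)‖₊ : ℝ≥0) : ℝ≥0∞) ^ (n:ℝ) * μH[(n : ℝ)] P) :=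
        mul_le_mul_right step2 _
    _ ≤ ((Real.toNNReal (Real.sqrt ((n:ℝ) + 1)) : ℝ≥0) : ℝ≥0∞) ^ (n:ℝ)
          * (((‖(4 * (n:ℝ) + 5)‖₊ : ℝ≥0) : ℝ≥0∞) ^ (n:ℝ) * μH[(n : ℝ)] (frontier K)) :=
        mul_le_mul_right (mul_le_mul_right step3 _) _
    _ = (((Real.toNNReal (Real.sqrt ((n:ℝ) + 1)) : ℝ≥0) : ℝ≥0∞) ^ (n:ℝ)
          * ((‖(4 * (n:ℝ) + 5)‖₊ : ℝ≥0) : ℝ≥0∞) ^ (n:ℝ)) * μH[(n : ℝ)] (frontier K) := by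
        ring
    _ ≤ ENNReal.ofReal (Real.sqrt ((n:ℝ) + 1) ^ n * (4 * (n:ℝ) + 5) ^ n)
          * μH[(n : ℝ)] (frontier K) := mul_le_mul_left hAB _

end
end
end

section
/- There is a constant c_d > 0 depending only on d such that the following holds. Let d ≥ 2, let U ⊆ ℝ^d be a U-shaped closed convex set with nonempty interior, let ε > 0, let q be a frontier point of U, and let h be a non-vertical supporting hyperplane of U at q, written h = {x ∈ ℝ^d : x_d = ⟨p̂, x̂⟩ − p_d} for a point p ∈ ℝ^d. If π(DBase) is compact and q̂ lies in the interior of π(DBase) as a subset of ℝ^{d−1}, then H^{d−1}(π(DBase)) · H^{d−1}(π(CBase)) ≥ c_d · ε^{d−1}. -/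
open MeasureTheory Metric Set
open scoped RealInnerProductSpace ENNReal Pointwise Matrix

noncomputable section

def vprojL (n : ℕ) : EuclideanSpace ℝ (Fin (n + 1)) →ₗ[ℝ] EuclideanSpace ℝ (Fin n) where
  toFun := vproj n
  map_add' := fun _ _ => rfl
  map_smul' := fun _ _ => rfl

theorem vol_ppiped (n : ℕ) (v : Fin n → EuclideanSpace ℝ (Fin n)) :
    volume (parallelepiped v) =
      ENNReal.ofReal |(Matrix.of fun i j => v i j).det| := by
  classical
  set b := EuclideanSpace.basisFun (Fin n) ℝ with hb
  set L := Module.Basis.constr b.toBasis ℝ v with hL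
  have h1 : (L : _ →ₗ[ℝ] _) '' parallelepiped (⇑b.toBasis) = parallelepiped v := by
    rw [image_parallelepiped]
    have : ⇑L ∘ ⇑b.toBasis = v := funext fun i => b.toBasis.constr_basis ℝ v i
    rw [this]
  have h2 : volume (parallelepiped (⇑b.toBasis)) = 1 := by
    rw [show ⇑b.toBasis = ⇑b from b.coe_toBasis]
    exact b.volume_parallelepiped
  rw [← h1, MeasureTheory.Measure.addHaar_image_linearMap, h2, mul_one]
  congr 2
  rw [← LinearMap.det_toMatrix b.toBasis, ← Matrix.det_transpose]
  congr 1
  ext i j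
  simp only [LinearMap.toMatrix_apply, hL, hb, Matrix.transpose_apply, Matrix.of_apply]
  rw [Module.Basis.constr_basis]
  rfl

theorem scaled_ppiped_subset {n : ℕ} {S : Set (EuclideanSpace ℝ (Fin n))}
    (hS : Convex ℝ S) (h0 : (0 : EuclideanSpace ℝ (Fin n)) ∈ S)
    {u : Fin n → EuclideanSpace ℝ (Fin n)} (hu : ∀ i, u i ∈ S) :
    (n : ℝ)⁻¹ • parallelepiped u ⊆ S := by
  rcases Nat.eq_zero_or_pos n with hn | hn
  · subst hn
    rintro x ⟨y, -, rfl⟩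
    have : (fun x : EuclideanSpace ℝ (Fin 0) => ((0:ℕ) : ℝ)⁻¹ • x) y = 0 := by
      ext j; exact absurd j.2 (by omega)
    rw [this]; exact h0
  rintro x ⟨y, hy, rfl⟩
  rw [mem_parallelepiped_iff] at hy
  obtain ⟨t, ht, rfl⟩ := hy
  simp only []
  rw [Finset.smul_sum]
  simp_rw [smul_smul]
  have key : ∀ (c : Fin n → ℝ), (∀ i, 0 ≤ c i) → (∑ i, c i) ≤ 1 → (∑ i, c i • u i) ∈ S := by
    intro c hc hcs
    have := hS.sum_mem (t := (Finset.univ : Finset (Option (Fin n))))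
      (w := fun o => Option.elim o (1 - ∑ i, c i) c)
      (z := fun o => Option.elim o 0 u) ?_ ?_ ?_
    · simpa [Fintype.sum_option] using this
    · rintro (_|i) _
      · simpa using hcs
      · exact hc i
    · simp [Fintype.sum_option]
    · rintro (_|i) _
      · exact h0
      · exact hu i
  apply key
  · intro i
    exact mul_nonneg (by positivity) (ht.1 i)
  · calc ∑ i, (n:ℝ)⁻¹ * t i ≤ ∑ _i : Fin n, (n:ℝ)⁻¹ * 1 := by
          apply Finset.sum_le_sum
          intro i _
          exact mul_le_mul_of_nonneg_left (ht.2 i) (by positivity)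
        _ = 1 := by
          rw [Finset.sum_const]
          simp
          field_simp


theorem mahler_easy {n : ℕ} {K : Set (EuclideanSpace ℝ (Fin n))}
    (hKc : IsCompact K) (hKconv : Convex ℝ K)
    (h0 : (0 : EuclideanSpace ℝ (Fin n)) ∈ interior K) :
    ENNReal.ofReal (((n:ℝ)^n)⁻¹ * ((n:ℝ)^n)⁻¹) ≤
      volume K * volume {v : EuclideanSpace ℝ (Fin n) | ∀ x ∈ K, ⟪v, x⟫ ≤ 1} := by
  classical
  set B : Set (EuclideanSpace ℝ (Fin n)) :=
    {v : EuclideanSpace ℝ (Fin n) | ∀ x ∈ K, ⟪v, x⟫ ≤ 1} with hBdef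
  have h0K : (0 : EuclideanSpace ℝ (Fin n)) ∈ K := interior_subset h0
  set Kn : Set (Fin n → EuclideanSpace ℝ (Fin n)) := Set.univ.pi (fun _ => K) with hKn
  have hKnc : IsCompact Kn := isCompact_univ_pi fun _ => hKc
  have hKnne : Kn.Nonempty := ⟨fun _ => 0, fun _ _ => h0K⟩
  set f : (Fin n → EuclideanSpace ℝ (Fin n)) → ℝ :=
    fun v => |(Matrix.of fun i j => v i j).det| with hf
  have hfc : Continuous f := by
    apply Continuous.abs
    apply Continuous.matrix_det
    exact continuous_pi fun i => continuous_pi fun j =>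
      (PiLp.continuous_apply 2 _ j).comp (continuous_apply i)
  obtain ⟨v, hvKn, hmax⟩ := hKnc.exists_isMaxOn hKnne hfc.continuousOn
  have hvK : ∀ i, v i ∈ K := fun i => hvKn i (mem_univ i)
  set M : Matrix (Fin n) (Fin n) ℝ := Matrix.of fun i j => v i j with hM
  obtain ⟨r, hr, hball⟩ : ∃ r > 0, Metric.ball (0 : EuclideanSpace ℝ (Fin n)) r ⊆ K := by
    rw [mem_interior_iff_mem_nhds, Metric.mem_nhds_iff] at h0
    exact ⟨h0.choose, h0.choose_spec.1, h0.choose_spec.2⟩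
  have hD : 0 < |M.det| := by
    set u : Fin n → EuclideanSpace ℝ (Fin n) :=
      fun i => (r/2) • EuclideanSpace.single i 1 with hu
    have huK : ∀ i, u i ∈ K := by
      intro i
      apply hball
      rw [Metric.mem_ball, dist_zero_right, hu]
      simp only [norm_smul, Real.norm_eq_abs]
      rw [EuclideanSpace.norm_single]
      rw [norm_one, mul_one, abs_of_pos (by positivity : (0:ℝ) < r/2)]
      linarith
    have hfu : f u = (r/2)^n := by
      have heq : (Matrix.of fun i j => u i j) = Matrix.diagonal (fun _ => r/2) := by
        ext i j
        simp only [Matrix.of_apply, hu, Matrix.diagonal_apply, PiLp.smul_apply,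
          EuclideanSpace.single_apply, smul_eq_mul]
        rcases eq_or_ne i j with rfl | hij
        · simp
        · simp [Ne.symm hij, hij]
      rw [hf]
      simp only [heq, Matrix.det_diagonal, Finset.prod_const, Finset.card_univ,
        Fintype.card_fin]
      exact abs_of_nonneg (by positivity)
    have h2 : f u ≤ f v := hmax (show u ∈ Kn from fun i _ => huK i)
    rw [hfu] at h2
    exact lt_of_lt_of_le (by positivity) h2
  have hMdet : M.det ≠ 0 := fun h => by simp [h] at hD
  have hMunit : IsUnit M.det := Ne.isUnit hMdet
  have hcoeff : ∀ x ∈ K, ∀ i, |(M⁻¹.transpose *ᵥ (fun j => x j)) i| ≤ 1 := by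
    intro x hx i
    set a : Fin n → ℝ := M⁻¹.transpose *ᵥ (fun j => x j) with ha
    have hxa : (fun j => x j) = ∑ k, a k • M k := by
      have h1 : M.transpose *ᵥ a = fun j => x j := by
        rw [ha, Matrix.mulVec_mulVec, ← Matrix.transpose_mul,
          Matrix.nonsing_inv_mul M hMunit, Matrix.transpose_one, Matrix.one_mulVec]
      rw [← h1]
      funext j
      rw [Matrix.mulVec, dotProduct, Finset.sum_apply]
      apply Finset.sum_congr rfl
      intro k _
      simp [Matrix.transpose_apply, mul_comm]
    have hdet : (M.updateRow i (fun j => x j)).det = a i * M.det := by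
      rw [hxa, Matrix.det_updateRow_sum]
      rfl
    have hupd : f (Function.update v i x) ≤ f v := by
      apply hmax
      intro k _
      rcases eq_or_ne k i with rfl | hk
      · simpa using hx
      · simpa [Function.update_apply, hk] using hvK k
    have hfeq : f (Function.update v i x) = |a i * M.det| := by
      have hmat : (Matrix.of fun i' j => Function.update v i x i' j) =
          M.updateRow i (fun j => x j) := by
        ext i' j
        simp only [Matrix.of_apply, Function.update_apply, Matrix.updateRow_apply]
        split <;> rfl
      rw [hf]
      simp only []
      rw [hmat, hdet]
    have hfv : f v = |M.det| := rfl
    rw [hfeq, abs_mul, hfv] at hupd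
    have : |a i| * |M.det| ≤ 1 * |M.det| := by linarith
    exact le_of_mul_le_mul_right this hD
  -- dual vectors
  set w : Fin n → EuclideanSpace ℝ (Fin n) := fun i => WithLp.toLp 2 (fun j => M⁻¹ j i) with hw
  have hwB : ∀ i, w i ∈ B := by
    intro i
    intro x hx
    have hinner : ⟪w i, x⟫ = (M⁻¹.transpose *ᵥ (fun j => x j)) i := by
      simp only [PiLp.inner_apply, RCLike.inner_apply, conj_trivial]
      rw [Matrix.mulVec, dotProduct]
      apply Finset.sum_congr rfl
      intro j _
      simp [hw, Matrix.transpose_apply, mul_comm]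
    rw [hinner]
    exact le_trans (le_abs_self _) (hcoeff x hx i)
  have h0B : (0 : EuclideanSpace ℝ (Fin n)) ∈ B := fun x hx => by
    simp
  have hBconv : Convex ℝ B := by
    intro y hy z hz s t hs ht hst
    intro x hx
    have : ⟪s • y + t • z, x⟫ = s * ⟪y, x⟫ + t * ⟪z, x⟫ := by
      rw [inner_add_left, real_inner_smul_left, real_inner_smul_left]
    rw [this]
    calc s * ⟪y, x⟫ + t * ⟪z, x⟫ ≤ s * 1 + t * 1 := by
          gcongr
          · exact hy x hx
          · exact hz x hx
      _ = 1 := by linarith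
  -- volume bounds
  have hvolK : ENNReal.ofReal (((n:ℝ)^n)⁻¹) * ENNReal.ofReal |M.det| ≤ volume K := by
    have hsub : (n : ℝ)⁻¹ • parallelepiped v ⊆ K :=
      scaled_ppiped_subset hKconv h0K hvK
    calc ENNReal.ofReal (((n:ℝ)^n)⁻¹) * ENNReal.ofReal |M.det|
        = ENNReal.ofReal |((n:ℝ)⁻¹) ^ Module.finrank ℝ (EuclideanSpace ℝ (Fin n))| *
            volume (parallelepiped v) := by
          rw [vol_ppiped, finrank_euclideanSpace_fin]
          congr 2
          rw [abs_pow, abs_inv, Nat.abs_cast, inv_pow]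
      _ = volume ((n:ℝ)⁻¹ • parallelepiped v) := (Measure.addHaar_smul _ _ _).symm
      _ ≤ volume K := measure_mono hsub
  have hvolB : ENNReal.ofReal (((n:ℝ)^n)⁻¹) * ENNReal.ofReal |M.det|⁻¹ ≤ volume B := by
    have hsub : (n : ℝ)⁻¹ • parallelepiped w ⊆ B :=
      scaled_ppiped_subset hBconv h0B hwB
    have hdetw : (Matrix.of fun i j => w i j).det = M⁻¹.transpose.det := by
      congr 1
    calc ENNReal.ofReal (((n:ℝ)^n)⁻¹) * ENNReal.ofReal |M.det|⁻¹
        = ENNReal.ofReal |((n:ℝ)⁻¹) ^ Module.finrank ℝ (EuclideanSpace ℝ (Fin n))| *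
            volume (parallelepiped w) := by
          rw [vol_ppiped, finrank_euclideanSpace_fin, hdetw, Matrix.det_transpose,
            Matrix.det_nonsing_inv]
          congr 2
          · rw [abs_pow, abs_inv, Nat.abs_cast, inv_pow]
          · rw [Ring.inverse_eq_inv', abs_inv]
      _ = volume ((n:ℝ)⁻¹ • parallelepiped w) := (Measure.addHaar_smul _ _ _).symm
      _ ≤ volume B := measure_mono hsub
  calc ENNReal.ofReal (((n:ℝ)^n)⁻¹ * ((n:ℝ)^n)⁻¹)
      = (ENNReal.ofReal (((n:ℝ)^n)⁻¹) * ENNReal.ofReal |M.det|) *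
        (ENNReal.ofReal (((n:ℝ)^n)⁻¹) * ENNReal.ofReal |M.det|⁻¹) := by
        rw [mul_assoc, ← mul_assoc (ENNReal.ofReal |M.det|), mul_comm (ENNReal.ofReal |M.det|),
          mul_assoc, ← ENNReal.ofReal_mul (le_of_lt (abs_pos.mpr hMdet)),
          mul_inv_cancel₀ (ne_of_gt hD), ENNReal.ofReal_one, mul_one,
          ← ENNReal.ofReal_mul (by positivity)]
    _ ≤ volume K * volume B := mul_le_mul' hvolK hvolB

set_option maxHeartbeats 1000000 in
/-- Mahler-volume bound for bases: there is `c_d > 0` such that, in the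
setting of the projective-dual correspondence, if the projected dual-cap base `π(DBase)`
is compact with `q̂` in its interior, then
`H^{d-1}(π(DBase)) · H^{d-1}(π(CBase)) ≥ c_d · ε^{d-1}`. -/
theorem base_product_lower_bound (n : ℕ) (hn : 1 ≤ n) :
    ∃ c : ℝ, 0 < c ∧
      ∀ (U : Set (EuclideanSpace ℝ (Fin (n + 1)))),
        IsClosed U → Convex ℝ U → (interior U).Nonempty →
        (∀ x ∈ U, ∀ t : ℝ, 0 ≤ t → x + t • ed n ∈ U) →
        ∀ ε : ℝ, 0 < ε →
        ∀ q : EuclideanSpace ℝ (Fin (n + 1)), q ∈ frontier U →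
        ∀ p : EuclideanSpace ℝ (Fin (n + 1)),
          q (Fin.last n) = ⟪vproj n p, vproj n q⟫ - p (Fin.last n) →
          ((∀ x ∈ U, ⟪vproj n p, vproj n x⟫ - p (Fin.last n) ≤ x (Fin.last n)) ∨
           (∀ x ∈ U, x (Fin.last n) ≤ ⟪vproj n p, vproj n x⟫ - p (Fin.last n))) →
          IsCompact (vproj n ''
            ({x | x (Fin.last n) = ⟪vproj n p, vproj n x⟫ - p (Fin.last n)} ∩
              closure (convexHull ℝ (U ∪ {q - ε • ed n})))) →
          vproj n q ∈ interior (vproj n ''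
            ({x | x (Fin.last n) = ⟪vproj n p, vproj n x⟫ - p (Fin.last n)} ∩
              closure (convexHull ℝ (U ∪ {q - ε • ed n})))) →
          ENNReal.ofReal (c * ε ^ n) ≤
            volume (vproj n ''
              ({x | x (Fin.last n) = ⟪vproj n p, vproj n x⟫ - p (Fin.last n)} ∩
                closure (convexHull ℝ (U ∪ {q - ε • ed n})))) *
            volume (vproj n ''
              (Udual U ∩
                {y : EuclideanSpace ℝ (Fin (n + 1)) |
                  y (Fin.last n) = ⟪vproj n q, vproj n y⟫ - q (Fin.last n) + ε})) := by
  classical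
  refine ⟨((n:ℝ)^n)⁻¹ * ((n:ℝ)^n)⁻¹, by positivity, ?_⟩
  intro U hUclosed hUconv hUint hUshape ε hε q hqfr p hq hdisj hAcomp hqint
  set ph : EuclideanSpace ℝ (Fin n) := vproj n p with hph
  set qh : EuclideanSpace ℝ (Fin n) := vproj n q with hqh
  set P : ℝ := p (Fin.last n) with hP
  set Q : ℝ := q (Fin.last n) with hQ
  set Hpl : Set (EuclideanSpace ℝ (Fin (n+1))) :=
    {x | x (Fin.last n) = ⟪vproj n p, vproj n x⟫ - p (Fin.last n)} with hHpl
  set D : Set (EuclideanSpace ℝ (Fin (n+1))) :=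
    closure (convexHull ℝ (U ∪ {q - ε • ed n})) with hD
  set A : Set (EuclideanSpace ℝ (Fin n)) := vproj n '' (Hpl ∩ D) with hA
  set C : Set (EuclideanSpace ℝ (Fin n)) := vproj n ''
    (Udual U ∩ {y : EuclideanSpace ℝ (Fin (n + 1)) |
      y (Fin.last n) = ⟪vproj n q, vproj n y⟫ - q (Fin.last n) + ε}) with hC
  -- basic facts about vproj and ed
  have hvproj_ed : vproj n (ed n) = 0 := by
    ext j
    show (ed n) j.castSucc = 0
    rw [ed, EuclideanSpace.single_apply]
    simp [Fin.ne_of_lt (Fin.castSucc_lt_last j)]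
  have hed_last : ed n (Fin.last n) = 1 := by
    rw [ed, EuclideanSpace.single_apply]; simp
  -- the hyperplane supports U from below
  have hsupp : ∀ x ∈ U, ⟪ph, vproj n x⟫ - P ≤ x (Fin.last n) := by
    rcases hdisj with h | h
    · exact h
    · exfalso
      obtain ⟨x₀, hx₀⟩ := hUint
      have hx₀U : x₀ ∈ U := interior_subset hx₀
      set t : ℝ := max 0 (⟪ph, vproj n x₀⟫ - P - x₀ (Fin.last n) + 1) with ht
      have htnn : 0 ≤ t := le_max_left _ _
      have hmem := hUshape x₀ hx₀U t htnn
      have h1 := h _ hmem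
      have h2 : vproj n (x₀ + t • ed n) = vproj n x₀ := by
        have : vproj n (x₀ + t • ed n) = vproj n x₀ + t • vproj n (ed n) := rfl
        rw [this, hvproj_ed, smul_zero, add_zero]
      have h3 : (x₀ + t • ed n) (Fin.last n) = x₀ (Fin.last n) + t := by
        show x₀ (Fin.last n) + t • (ed n) (Fin.last n) = _
        rw [hed_last, smul_eq_mul, mul_one]
      rw [h2, h3] at h1
      have h4 : ⟪ph, vproj n x₀⟫ - P - x₀ (Fin.last n) + 1 ≤ t := le_max_right _ _
      linarith
  -- translate A to the origin
  set K : Set (EuclideanSpace ℝ (Fin n)) := (fun x => x + qh) ⁻¹' A with hK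
  have hKA : ∀ x, x ∈ K ↔ x + qh ∈ A := fun x => Iff.rfl
  have hKcomp : IsCompact K := by
    have : K = (fun a => a - qh) '' A := by
      ext x
      constructor
      · intro hx
        exact ⟨x + qh, hx, by show x + qh - qh = x; rw [add_sub_cancel_right]⟩
      · rintro ⟨a, ha, rfl⟩
        show a - qh + qh ∈ A
        rw [sub_add_cancel]
        exact ha
    rw [this]
    exact hAcomp.image (continuous_id.sub continuous_const)
  have hHplconv : Convex ℝ Hpl := by
    intro x hx y hy a b ha hb hab
    show (a • x + b • y) (Fin.last n) = ⟪vproj n p, vproj n (a • x + b • y)⟫ - P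
    have hv : vproj n (a • x + b • y) = a • vproj n x + b • vproj n y := rfl
    have hl : (a • x + b • y) (Fin.last n) = a * x (Fin.last n) + b * y (Fin.last n) := rfl
    rw [hv, hl, inner_add_right, real_inner_smul_right, real_inner_smul_right]
    have hx' : x (Fin.last n) = ⟪ph, vproj n x⟫ - P := hx
    have hy' : y (Fin.last n) = ⟪ph, vproj n y⟫ - P := hy
    rw [hx', hy']
    rw [hph]
    linear_combination (-P : ℝ) * hab
  have hAconv : Convex ℝ A := by
    have : A = (vprojL n) '' (Hpl ∩ D) := rfl
    rw [this]
    exact Convex.linear_image (hHplconv.inter ((convex_convexHull ℝ _).closure)) _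
  have hKconv : Convex ℝ K := by
    intro x hx y hy a b ha hb hab
    have heq : a • x + b • y + qh = a • (x + qh) + b • (y + qh) := by
      have h1 : a • (x + qh) + b • (y + qh) = a • x + b • y + (a • qh + b • qh) := by
        rw [smul_add, smul_add]; abel
      rw [h1, ← add_smul, hab, one_smul]
    show a • x + b • y + qh ∈ A
    rw [heq]
    exact hAconv hx hy ha hb hab
  have h0K : (0 : EuclideanSpace ℝ (Fin n)) ∈ interior K := by
    have : K = (Homeomorph.addRight qh) ⁻¹' A := rfl
    rw [this, ← Homeomorph.preimage_interior]
    show (0 : EuclideanSpace ℝ (Fin n)) + qh ∈ interior A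
    rw [zero_add]
    exact hqint
  -- the polar body of K
  set B : Set (EuclideanSpace ℝ (Fin n)) :=
    {v : EuclideanSpace ℝ (Fin n) | ∀ x ∈ K, ⟪v, x⟫ ≤ 1} with hB
  -- main geometric inclusion
  have hincl : (fun v => ph + ε • v) '' B ⊆ C := by
    rintro _ ⟨v, hv, rfl⟩
    set w : EuclideanSpace ℝ (Fin n) := ph + ε • v with hw
    set y : EuclideanSpace ℝ (Fin (n+1)) :=
      WithLp.toLp 2 (fun i => Fin.lastCases (motive := fun _ => ℝ) (⟪qh, w⟫ - Q + ε) (fun j => w j) i) with hy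
    have hylast : y (Fin.last n) = ⟪qh, w⟫ - Q + ε := by
      show Fin.lastCases (motive := fun _ => ℝ) (⟪qh, w⟫ - Q + ε) (fun j => w j) (Fin.last n) = _
      rw [Fin.lastCases_last]
    have hyproj : vproj n y = w := by
      ext j
      show Fin.lastCases (motive := fun _ => ℝ) (⟪qh, w⟫ - Q + ε) (fun j => w j) (Fin.castSucc j) = w j
      rw [Fin.lastCases_castSucc]
    refine ⟨y, ⟨?_, ?_⟩, hyproj⟩
    · -- y ∈ Udual U
      intro z hz
      set zh : EuclideanSpace ℝ (Fin n) := vproj n z with hzh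
      set Z : ℝ := z (Fin.last n) with hZ
      set s : ℝ := Z - (⟪ph, zh⟫ - P) with hs
      have hs0 : 0 ≤ s := by
        have := hsupp z hz
        rw [hs]; linarith
      have hεs : 0 < ε + s := by linarith
      set lam : ℝ := ε / (ε + s) with hlam
      set mu : ℝ := s / (ε + s) with hmu
      have hlam0 : 0 ≤ lam := by positivity
      have hmu0 : 0 ≤ mu := by positivity
      have hlammu : lam + mu = 1 := by rw [hlam, hmu]; field_simp
      set m : EuclideanSpace ℝ (Fin (n+1)) := lam • z + mu • (q - ε • ed n) with hm
      have hmD : m ∈ D := by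
        apply subset_closure
        exact (convex_convexHull ℝ _) (subset_convexHull ℝ _ (mem_union_left _ hz))
          (subset_convexHull ℝ _
            (show q - ε • ed n ∈ U ∪ {q - ε • ed n} from mem_union_right _ rfl))
          hlam0 hmu0 hlammu
      have hmproj : vproj n m = lam • zh + mu • qh := by
        have h1 : vproj n m = lam • vproj n z + mu • vproj n (q - ε • ed n) := rfl
        have h2 : vproj n (q - ε • ed n) = qh := by
          have : vproj n (q - ε • ed n) = vproj n q - ε • vproj n (ed n) := rfl
          rw [this, hvproj_ed, smul_zero, sub_zero]
        rw [h1, h2]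
      have hmlast : m (Fin.last n) = lam * Z + mu * (Q - ε) := by
        have h1 : m (Fin.last n)
            = lam * z (Fin.last n) + mu * (q (Fin.last n) - ε * ed n (Fin.last n)) := rfl
        rw [h1, hed_last, mul_one]
      have hmHpl : m ∈ Hpl := by
        show m (Fin.last n) = ⟪vproj n p, vproj n m⟫ - P
        rw [hmlast, hmproj]
        rw [inner_add_right, real_inner_smul_right, real_inner_smul_right]
        have hZval : Z = ⟪ph, zh⟫ - P + s := by rw [hs]; ring
        have hQval : Q = ⟪ph, qh⟫ - P := hq
        rw [hZval, hQval, ← hph]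
        field_simp [hlam, hmu]
        have hlm : lam * s = mu * ε := by rw [hlam, hmu]; ring
        linear_combination hlm - P * hlammu
      have hmA : vproj n m ∈ A := ⟨m, ⟨hmHpl, hmD⟩, rfl⟩
      have hmK : vproj n m - qh ∈ K := by
        show vproj n m - qh + qh ∈ A
        rw [sub_add_cancel]
        exact hmA
      have hkey : ⟪v, vproj n m - qh⟫ ≤ 1 := hv _ hmK
      have hdiff : vproj n m - qh = lam • (zh - qh) := by
        have h7 : mu • qh = qh - lam • qh := by
          rw [show mu = 1 - lam by linarith [hlammu], sub_smul, one_smul]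
        rw [hmproj, h7, smul_sub]
        abel
      rw [hdiff, real_inner_smul_right] at hkey
      have hzq : lam * ⟪v, zh - qh⟫ ≤ 1 := hkey
      have hzq2 : ε * ⟪v, zh - qh⟫ ≤ ε + s := by
        have h5 : lam * ⟪v, zh - qh⟫ * (ε + s) ≤ 1 * (ε + s) :=
          mul_le_mul_of_nonneg_right hzq (le_of_lt hεs)
        have h6 : lam * (ε + s) = ε := by rw [hlam]; field_simp
        nlinarith [h6]
      -- conclude
      show ⟪vproj n y, vproj n z⟫ - z (Fin.last n) ≤ y (Fin.last n)
      rw [hyproj, hylast, ← hzh, ← hZ, hw]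
      rw [inner_add_left, real_inner_smul_left, inner_add_right, real_inner_smul_right]
      have hZval : Z = ⟪ph, zh⟫ - P + s := by rw [hs]; ring
      have hQval : Q = ⟪ph, qh⟫ - P := hq
      have hsym1 : ⟪qh, ph⟫ = ⟪ph, qh⟫ := real_inner_comm _ _
      have hsym2 : ⟪qh, v⟫ = ⟪v, qh⟫ := real_inner_comm _ _
      have hsub : ⟪v, zh - qh⟫ = ⟪v, zh⟫ - ⟪v, qh⟫ := inner_sub_right _ _ _
      rw [hZval, hQval, hsym1, hsym2]
      have hsym3 : ⟪v, zh⟫ = ⟪zh, v⟫ := real_inner_comm _ _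
      nlinarith [hzq2, hsub, hsym3]
    · -- y in the slab
      show y (Fin.last n) = ⟪vproj n q, vproj n y⟫ - Q + ε
      rw [hylast, hyproj, hqh]
  -- volume computations
  have hvolA : volume A = volume K := by
    rw [hK]
    exact (measure_preimage_add_right volume qh A).symm
  have himgB : (fun v => ph + ε • v) '' B = (fun x => x + (-ph)) ⁻¹' (ε • B) := by
    ext x
    constructor
    · rintro ⟨v, hv, rfl⟩
      show ph + ε • v + (-ph) ∈ ε • B
      have : ph + ε • v + (-ph) = ε • v := by abel
      rw [this]
      exact smul_mem_smul_set hv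
    · intro hx
      obtain ⟨v, hv, hxv⟩ := hx
      refine ⟨v, hv, ?_⟩
      have h8 : x + (-ph) = ε • v := hxv.symm
      show ph + ε • v = x
      rw [← h8]; abel
  have hvolC : ENNReal.ofReal (ε ^ n) * volume B ≤ volume C := by
    calc ENNReal.ofReal (ε ^ n) * volume B
        = ENNReal.ofReal |ε ^ Module.finrank ℝ (EuclideanSpace ℝ (Fin n))| * volume B := by
          rw [finrank_euclideanSpace_fin, abs_of_pos (by positivity)]
      _ = volume (ε • B) := (Measure.addHaar_smul _ _ _).symm
      _ = volume ((fun x => x + (-ph)) ⁻¹' (ε • B)) :=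
          (measure_preimage_add_right volume (-ph) (ε • B)).symm
      _ = volume ((fun v => ph + ε • v) '' B) := by rw [himgB]
      _ ≤ volume C := measure_mono hincl
  have hmahler := mahler_easy hKcomp hKconv h0K
  calc ENNReal.ofReal (((n:ℝ)^n)⁻¹ * ((n:ℝ)^n)⁻¹ * ε ^ n)
      = ENNReal.ofReal (((n:ℝ)^n)⁻¹ * ((n:ℝ)^n)⁻¹) * ENNReal.ofReal (ε ^ n) := by
        rw [← ENNReal.ofReal_mul (by positivity)]
    _ ≤ (volume K * volume B) * ENNReal.ofReal (ε ^ n) :=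
        mul_le_mul_left hmahler _
    _ = volume K * (ENNReal.ofReal (ε ^ n) * volume B) := by ring
    _ ≤ volume A * volume C := by
        rw [hvolA]
        exact mul_le_mul_right hvolC _
end
end

section
/- There is a constant c_d > 0 depending only on d such that: let K ⊆ ℝ^d (d ≥ 2) be a convex body and ε > 0 with K ⊆ [−(1−2ε), 1−2ε]^d, and let U = K^{(2ε)} and U* its projective dual. For every q ∈ ∂̄K^{(ε)} and every outward unit normal u of S(K) at q, writing the supporting hyperplane {x : ⟨u, x − q⟩ = 0} as {x : x_d = ⟨p̂, x̂⟩ − p_d} for p ∈ ℝ^d, the ε-cap of U* induced by p, namely {y ∈ frontier(U*) : y_d ≤ ⟨q̂, ŷ⟩ − q_d + ε}, has vertical projection contained in the closed ball of radius c_d centered at the origin of ℝ^{d−1}. -/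
open MeasureTheory Metric Set
open scoped RealInnerProductSpace ENNReal

noncomputable section

lemma vlift_castSucc (n : ℕ) (y : EuclideanSpace ℝ (Fin n)) (t : ℝ) (j : Fin n) :
    vlift n y t j.castSucc = y j := by
  simp [vlift, j.isLt]

lemma vlift_last (n : ℕ) (y : EuclideanSpace ℝ (Fin n)) (t : ℝ) :
    vlift n y t (Fin.last n) = t := by
  simp [vlift]

lemma vproj_vlift (n : ℕ) (y : EuclideanSpace ℝ (Fin n)) (t : ℝ) :
    vproj n (vlift n y t) = y := by
  ext j
  simp [vproj, vlift_castSucc]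

lemma inner_split {n : ℕ} (u x : EuclideanSpace ℝ (Fin (n + 1))) :
    ⟪u, x⟫ = ⟪vproj n u, vproj n x⟫ + u (Fin.last n) * x (Fin.last n) := by
  simp only [PiLp.inner_apply, RCLike.inner_apply, starRingEnd_apply, star_trivial]
  rw [Fin.sum_univ_castSucc, mul_comm (x (Fin.last n)) (u (Fin.last n))]
  rfl

lemma norm_vproj_le {n : ℕ} (u : EuclideanSpace ℝ (Fin (n + 1))) :
    ‖vproj n u‖ ≤ ‖u‖ := by
  rw [EuclideanSpace.norm_eq, EuclideanSpace.norm_eq]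
  apply Real.sqrt_le_sqrt
  rw [Fin.sum_univ_castSucc]
  have : (0:ℝ) ≤ ‖u (Fin.last n)‖ ^ 2 := sq_nonneg _
  have h : ∑ j : Fin n, ‖vproj n u j‖ ^ 2 = ∑ j : Fin n, ‖u j.castSucc‖ ^ 2 := rfl
  linarith [le_refl (∑ j : Fin n, ‖u j.castSucc‖ ^ 2)]

lemma norm_vproj_le_down {n : ℕ} (hn : 1 ≤ n) {u : EuclideanSpace ℝ (Fin (n + 1))}
    (h : ∀ j : Fin n, |u j.castSucc| ≤ -u (Fin.last n)) :
    ‖vproj n u‖ ≤ Real.sqrt n * (-(u (Fin.last n))) := by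
  have hd : 0 ≤ -u (Fin.last n) := le_trans (abs_nonneg _) (h ⟨0, hn⟩)
  rw [EuclideanSpace.norm_eq]
  have h1 : ∑ j : Fin n, ‖vproj n u j‖ ^ 2 ≤ (n : ℝ) * (-(u (Fin.last n))) ^ 2 := by
    calc ∑ j : Fin n, ‖vproj n u j‖ ^ 2 ≤ ∑ _j : Fin n, (-(u (Fin.last n))) ^ 2 := by
          apply Finset.sum_le_sum; intro j _
          have hj := h j
          have : ‖vproj n u j‖ = |u j.castSucc| := rfl
          rw [this]
          nlinarith [abs_nonneg (u j.castSucc)]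
      _ = (n : ℝ) * (-(u (Fin.last n))) ^ 2 := by
          rw [Finset.sum_const, Finset.card_univ, Fintype.card_fin]; ring
  calc Real.sqrt (∑ j : Fin n, ‖vproj n u j‖ ^ 2)
      ≤ Real.sqrt ((n : ℝ) * (-(u (Fin.last n))) ^ 2) := Real.sqrt_le_sqrt h1
    _ = Real.sqrt n * (-(u (Fin.last n))) := by
        rw [Real.sqrt_mul (by positivity), Real.sqrt_sq hd]

lemma ulast_le {n : ℕ} (hn : 1 ≤ n) {u : EuclideanSpace ℝ (Fin (n + 1))}
    (hu : u ∈ downDirs n) : u (Fin.last n) ≤ -(Real.sqrt (n+1))⁻¹ := by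
  obtain ⟨hu1, hu2⟩ := hu
  have hd : 0 ≤ -u (Fin.last n) := le_trans (abs_nonneg _) (hu2 ⟨0, hn⟩)
  have hs : ∑ i, ‖u i‖ ^ 2 = 1 := by
    have h0 : (0:ℝ) ≤ ∑ i, ‖u i‖ ^ 2 := by positivity
    have he := EuclideanSpace.norm_eq u
    rw [hu1] at he
    exact Real.sqrt_eq_one.mp he.symm
  have hsum : (1:ℝ) ≤ ((n:ℝ) + 1) * (u (Fin.last n)) ^ 2 := by
    rw [Fin.sum_univ_castSucc] at hs
    have hb : ∑ j : Fin n, ‖u j.castSucc‖ ^ 2 ≤ (n:ℝ) * (u (Fin.last n)) ^ 2 := by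
      calc ∑ j : Fin n, ‖u j.castSucc‖ ^ 2 ≤ ∑ _j : Fin n, (u (Fin.last n)) ^ 2 := by
            apply Finset.sum_le_sum; intro j _
            have hj := hu2 j
            rw [Real.norm_eq_abs]
            nlinarith [abs_nonneg (u j.castSucc)]
        _ = (n : ℝ) * (u (Fin.last n)) ^ 2 := by
            rw [Finset.sum_const, Finset.card_univ, Fintype.card_fin]; ring
    have : ‖u (Fin.last n)‖ ^ 2 = (u (Fin.last n)) ^ 2 := by rw [Real.norm_eq_abs, sq_abs]
    nlinarith
  have hspos : 0 < Real.sqrt ((n:ℝ) + 1) := by positivity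
  have hsq := Real.sq_sqrt (show (0:ℝ) ≤ (n:ℝ)+1 by positivity)
  have ha2 : 1 ≤ (Real.sqrt ((n:ℝ)+1) * (-u (Fin.last n))) ^ 2 := by nlinarith
  have hs1 : 1 ≤ Real.sqrt ((n:ℝ)+1) * (-u (Fin.last n)) := by
    nlinarith [mul_nonneg hspos.le hd]
  have : (Real.sqrt ((n:ℝ)+1))⁻¹ ≤ -u (Fin.last n) := by
    rw [inv_eq_one_div, div_le_iff₀ hspos]
    nlinarith
  push_cast
  linarith

lemma mem_SK_iff {n : ℕ} {K : Set (EuclideanSpace ℝ (Fin (n+1)))} {x : EuclideanSpace ℝ (Fin (n+1))} :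
    x ∈ SK K ↔ ∀ u ∈ downDirs n, ⟪u, x⟫ ≤ suppFn K u := by
  simp [SK]

lemma vlift_mem_SK_iff {n : ℕ} {K : Set (EuclideanSpace ℝ (Fin (n+1)))}
    {y : EuclideanSpace ℝ (Fin n)} {t : ℝ} :
    vlift n y t ∈ SK K ↔
      ∀ u ∈ downDirs n, ⟪vproj n u, y⟫ + u (Fin.last n) * t ≤ suppFn K u := by
  rw [mem_SK_iff]
  refine forall₂_congr fun u hu => ?_
  rw [inner_split, vproj_vlift, vlift_last]

lemma suppFn_ge {n : ℕ} {K : Set (EuclideanSpace ℝ (Fin n))} (hK : IsCompact K)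
    {x0 : EuclideanSpace ℝ (Fin n)} (hx0 : x0 ∈ K) (u : EuclideanSpace ℝ (Fin n)) :
    ⟪u, x0⟫ ≤ suppFn K u :=
  le_csSup ((hK.image (continuous_const.inner continuous_id)).bddAbove) ⟨x0, hx0, rfl⟩

lemma neg_ed_mem (n : ℕ) : -ed n ∈ downDirs n := by
  constructor
  · rw [norm_neg]
    rw [ed, EuclideanSpace.norm_single]; norm_num
  · intro j
    have h1 : (ed n) j.castSucc = 0 := by
      simp [ed, EuclideanSpace.single_apply, (Fin.castSucc_lt_last j).ne]
    have h2 : (ed n) (Fin.last n) = 1 := by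
      simp [ed, EuclideanSpace.single_apply]
    simp [PiLp.neg_apply, h1, h2]

lemma isClosed_T {n : ℕ} {K : Set (EuclideanSpace ℝ (Fin (n+1)))}
    {y : EuclideanSpace ℝ (Fin n)} : IsClosed {t : ℝ | vlift n y t ∈ SK K} := by
  have h : {t : ℝ | vlift n y t ∈ SK K} =
      ⋂ u ∈ downDirs n, {t : ℝ | ⟪vproj n u, y⟫ + u (Fin.last n) * t ≤ suppFn K u} := by
    ext t
    simp only [mem_setOf_eq, vlift_mem_SK_iff, mem_iInter]
  rw [h]
  exact isClosed_biInter fun u _ =>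
    isClosed_le (by continuity) continuous_const

lemma bddBelow_T {n : ℕ} {K : Set (EuclideanSpace ℝ (Fin (n+1)))}
    {y : EuclideanSpace ℝ (Fin n)} : BddBelow {t : ℝ | vlift n y t ∈ SK K} := by
  refine ⟨-suppFn K (-ed n), fun t ht => ?_⟩
  have h := (vlift_mem_SK_iff.mp ht) (-ed n) (neg_ed_mem n)
  have h1 : vproj n (-ed n) = 0 := by
    ext j
    show -(ed n j.castSucc) = 0
    simp [ed, EuclideanSpace.single_apply, (Fin.castSucc_lt_last j).ne]
  have h2 : (-ed n) (Fin.last n) = -1 := by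
    show -(ed n (Fin.last n)) = -1
    simp [ed, EuclideanSpace.single_apply]
  rw [h1, h2, inner_zero_left] at h
  linarith

lemma T_nonempty {n : ℕ} (hn : 1 ≤ n) {K : Set (EuclideanSpace ℝ (Fin (n+1)))}
    (hK : IsCompact K) {x0 : EuclideanSpace ℝ (Fin (n+1))} (hx0 : x0 ∈ K)
    (y : EuclideanSpace ℝ (Fin n)) :
    ((‖y‖ + ‖x0‖) * Real.sqrt ((n:ℝ)+1)) ∈ {t : ℝ | vlift n y t ∈ SK K} := by
  rw [mem_setOf_eq, vlift_mem_SK_iff]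
  intro u hu
  have hul := ulast_le hn hu
  have hinner : ⟪vproj n u, y⟫ ≤ ‖y‖ := by
    have h1 := abs_real_inner_le_norm (vproj n u) y
    have h2 := norm_vproj_le u
    rw [hu.1] at h2
    nlinarith [le_abs_self (⟪vproj n u, y⟫ : ℝ), norm_nonneg y, norm_nonneg (vproj n u)]
  have ht0 : 0 ≤ (‖y‖ + ‖x0‖) * Real.sqrt ((n:ℝ)+1) := by positivity
  have hud : u (Fin.last n) * ((‖y‖ + ‖x0‖) * Real.sqrt ((n:ℝ)+1)) ≤ -(‖y‖ + ‖x0‖) := by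
    have hm := mul_le_mul_of_nonneg_right hul ht0
    have hsne : Real.sqrt ((n:ℝ)+1) ≠ 0 := by positivity
    have heq : -(Real.sqrt ((n:ℝ)+1))⁻¹ * ((‖y‖ + ‖x0‖) * Real.sqrt ((n:ℝ)+1))
        = -(‖y‖ + ‖x0‖) := by field_simp
    rw [heq] at hm
    exact hm
  have hsupp : -‖x0‖ ≤ suppFn K u := by
    have h1 := suppFn_ge hK hx0 u
    have h2 := abs_real_inner_le_norm u x0
    rw [hu.1, one_mul] at h2
    have := neg_abs_le (⟪u, x0⟫ : ℝ)
    linarith [(abs_le.mp h2).1]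
  linarith

lemma fK_mem_SK {n : ℕ} (hn : 1 ≤ n) {K : Set (EuclideanSpace ℝ (Fin (n+1)))}
    (hK : IsCompact K) {x0 : EuclideanSpace ℝ (Fin (n+1))} (hx0 : x0 ∈ K)
    (y : EuclideanSpace ℝ (Fin n)) : vlift n y (fK K y) ∈ SK K :=
  isClosed_T.csInf_mem ⟨_, T_nonempty hn hK hx0 y⟩ bddBelow_T

lemma fK_lip {n : ℕ} (hn : 1 ≤ n) {K : Set (EuclideanSpace ℝ (Fin (n+1)))}
    (hK : IsCompact K) {x0 : EuclideanSpace ℝ (Fin (n+1))} (hx0 : x0 ∈ K)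
    (y y' : EuclideanSpace ℝ (Fin n)) :
    fK K y' ≤ fK K y + Real.sqrt n * ‖y' - y‖ := by
  have hmem : vlift n y (fK K y) ∈ SK K := fK_mem_SK hn hK hx0 y
  have hmem' : fK K y + Real.sqrt n * ‖y' - y‖ ∈ {t : ℝ | vlift n y' t ∈ SK K} := by
    rw [mem_setOf_eq, vlift_mem_SK_iff]
    intro u hu
    have hbase := (vlift_mem_SK_iff.mp hmem) u hu
    have h2 : ⟪vproj n u, y' - y⟫ ≤ ‖vproj n u‖ * ‖y' - y‖ := real_inner_le_norm _ _
    have h3 := norm_vproj_le_down hn hu.2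
    have h4 : (⟪vproj n u, y'⟫ : ℝ) = ⟪vproj n u, y⟫ + ⟪vproj n u, y' - y⟫ := by
      rw [inner_sub_right]; ring
    have h5 : ⟪vproj n u, y' - y⟫ ≤ Real.sqrt n * (-(u (Fin.last n))) * ‖y' - y‖ := by
      calc ⟪vproj n u, y' - y⟫ ≤ ‖vproj n u‖ * ‖y' - y‖ := h2
        _ ≤ Real.sqrt n * (-(u (Fin.last n))) * ‖y' - y‖ :=
            mul_le_mul_of_nonneg_right h3 (norm_nonneg _)
    nlinarith
  have h := csInf_le bddBelow_T hmem'
  exact h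

lemma isClosed_Udual {n : ℕ} (U : Set (EuclideanSpace ℝ (Fin (n+1)))) :
    IsClosed (Udual U) := by
  have h : Udual U = ⋂ z ∈ U, {y : EuclideanSpace ℝ (Fin (n+1)) |
      ⟪vproj n y, vproj n z⟫ - z (Fin.last n) ≤ y (Fin.last n)} := by
    ext y; simp [Udual]
  rw [h]
  refine isClosed_biInter fun z _ => isClosed_le (Continuous.sub ?_ continuous_const) ?_
  · have h2 : (fun y : EuclideanSpace ℝ (Fin (n+1)) => (⟪vproj n y, vproj n z⟫ : ℝ))
        = fun y => ∑ j : Fin n, y j.castSucc * z j.castSucc := by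
      funext y
      simp [PiLp.inner_apply, RCLike.inner_apply, starRingEnd_apply, star_trivial, vproj, mul_comm]
    rw [h2]
    exact continuous_finset_sum _ fun j _ =>
      ((EuclideanSpace.proj (j.castSucc : Fin (n+1))).continuous).mul continuous_const
  · exact (EuclideanSpace.proj (Fin.last n)).continuous

/-- there is `c_d > 0` such that, for a convex body
`K ⊆ [−(1−2ε), 1−2ε]^d` and `U = K^{(2ε)}`, every useful `ε`-cap of the projective dual
`U*` (induced by a point of `∂̄K^{(ε)}` with an outward unit normal, whose supporting
hyperplane is written via `p`) has vertical projection contained in the closed ball of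
radius `c_d` about the origin of `ℝ^{d-1}`. -/
theorem useful_dual_caps_bounded (n : ℕ) (hn : 1 ≤ n) :
    ∃ c : ℝ, 0 < c ∧
      ∀ (K : Set (EuclideanSpace ℝ (Fin (n + 1)))),
        IsCompact K → Convex ℝ K → (interior K).Nonempty →
        ∀ ε : ℝ, 0 < ε →
        (∀ x ∈ K, ∀ i : Fin (n + 1), |x i| ≤ 1 - 2 * ε) →
        ∀ q ∈ lowerBdry K ε, ∀ u : EuclideanSpace ℝ (Fin (n + 1)), ‖u‖ = 1 →
          (∀ x ∈ SK K, ⟪u, x - q⟫ ≤ 0) →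
          ∀ p : EuclideanSpace ℝ (Fin (n + 1)),
            ({x : EuclideanSpace ℝ (Fin (n + 1)) | ⟪u, x - q⟫ = 0} =
              {x | x (Fin.last n) = ⟪vproj n p, vproj n x⟫ - p (Fin.last n)}) →
            vproj n ''
                {y ∈ frontier (Udual (Krestr K (2 * ε))) |
                  y (Fin.last n) ≤ ⟪vproj n q, vproj n y⟫ - q (Fin.last n) + ε}
              ⊆ Metric.closedBall 0 c := by
  refine ⟨Real.sqrt n + 1, by positivity, ?_⟩
  intro K hKcomp hKconv hKint ε hε hbox q hq u hu hnormal p hp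
  rintro _ ⟨w, ⟨hwfr, hwcap⟩, rfl⟩
  obtain ⟨x1, hx1i⟩ := hKint
  have hx0 : x1 ∈ K := interior_subset hx1i
  have hwU : w ∈ Udual (Krestr K (2 * ε)) := (isClosed_Udual _).frontier_subset hwfr
  obtain ⟨q0, hq0, rfl⟩ := hq
  rw [mem_closedBall_zero_iff]
  by_cases hw0 : vproj n w = 0
  · rw [hw0, norm_zero]; positivity
  · set a := vproj n w with ha
    set v : EuclideanSpace ℝ (Fin n) := ‖a‖⁻¹ • a with hv
    have hva : ‖v‖ = 1 := norm_smul_inv_norm hw0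
    set y' : EuclideanSpace ℝ (Fin n) := q0 + ε • v with hy'
    have hy'd : ‖y' - q0‖ = ε := by
      rw [hy', add_sub_cancel_left, norm_smul, hva, Real.norm_eq_abs,
        abs_of_pos hε, mul_one]
    have hz : vlift n y' (fK K y') ∈ Krestr K (2 * ε) := by
      constructor
      · exact fK_mem_SK hn hKcomp hx0 y'
      · show vproj n _ ∈ Koplus K (2 * ε)
        rw [vproj_vlift]
        show Metric.infDist y' (vproj n '' K) ≤ 2 * ε
        have hq0' : Metric.infDist q0 (vproj n '' K) ≤ ε := hq0
        calc Metric.infDist y' (vproj n '' K)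
            ≤ Metric.infDist q0 (vproj n '' K) + dist y' q0 :=
              Metric.infDist_le_infDist_add_dist
          _ ≤ ε + ε := add_le_add hq0' (by rw [dist_eq_norm, hy'd])
          _ = 2 * ε := by ring
    have hkey := hwU _ hz
    rw [vproj_vlift, vlift_last] at hkey
    simp only [vproj_vlift, vlift_last] at hwcap
    have hlip := fK_lip hn hKcomp hx0 q0 y'
    rw [hy'd] at hlip
    have hav : (⟪a, v⟫ : ℝ) = ‖a‖ := by
      rw [hv, real_inner_smul_right, real_inner_self_eq_norm_mul_norm]
      have : ‖a‖ ≠ 0 := norm_ne_zero_iff.mpr hw0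
      field_simp
    have hinner : (⟪a, y'⟫ : ℝ) = ⟪a, q0⟫ + ε * ‖a‖ := by
      rw [hy', inner_add_right, real_inner_smul_right, hav]
    have hcomm : (⟪q0, a⟫ : ℝ) = ⟪a, q0⟫ := real_inner_comm _ _
    have hcomm2 : (⟪a, y'⟫ : ℝ) = ⟪a, y'⟫ := rfl
    have hkey2 : (⟪a, y'⟫ : ℝ) - fK K y' ≤ w (Fin.last n) := by
      have : (⟪a, y'⟫ : ℝ) = ⟪vproj n w, y'⟫ := rfl
      linarith [hkey, real_inner_comm (vproj n w) y' ▸ hkey]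
    nlinarith [hkey2, hwcap, hlip, hinner, hcomm, hε]

end
end

section
/- There is a constant c_d > 0 depending only on d such that: let K ⊆ ℝ^d (d ≥ 2) be a convex body and ε > 0 with K ⊆ [−(1−2ε), 1−2ε]^d, and let U = K^{(2ε)} and U* its projective dual. For every t > 0 there exists a finite set P ⊆ frontier(U*) with card(P) ≤ c_d / t such that: for every q ∈ ∂̄K^{(ε)} and every outward unit normal u of S(K) at q, setting CBase = U* ∩ {y : y_d = ⟨q̂, ŷ⟩ − q_d + ε}, if H^{d−1}(π(CBase)) ≥ t then some point y ∈ P satisfies y_d ≤ ⟨q̂, ŷ⟩ − q_d + ε. -/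
open MeasureTheory Metric Set
open scoped RealInnerProductSpace ENNReal

noncomputable section

namespace StabAux


variable {n : ℕ}

lemma vproj_apply (x : EuclideanSpace ℝ (Fin (n+1))) (j : Fin n) :
    vproj n x j = x j.castSucc := rfl

lemma vlift_castSucc (y : EuclideanSpace ℝ (Fin n)) (t : ℝ) (j : Fin n) :
    vlift n y t j.castSucc = y j := by
  simp only [vlift, Fin.coe_castSucc, j.isLt, dif_pos]

lemma vlift_last (y : EuclideanSpace ℝ (Fin n)) (t : ℝ) :
    vlift n y t (Fin.last n) = t := by
  simp [vlift]

lemma vproj_vlift (y : EuclideanSpace ℝ (Fin n)) (t : ℝ) :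
    vproj n (vlift n y t) = y := by ext j; exact vlift_castSucc y t j

lemma vlift_eta (x : EuclideanSpace ℝ (Fin (n+1))) :
    vlift n (vproj n x) (x (Fin.last n)) = x := by
  ext i
  induction i using Fin.lastCases with
  | last => exact vlift_last _ _
  | cast j => rw [vlift_castSucc]; rfl

lemma vproj_add (x y : EuclideanSpace ℝ (Fin (n+1))) :
    vproj n (x + y) = vproj n x + vproj n y := rfl

lemma vproj_smul (c : ℝ) (x : EuclideanSpace ℝ (Fin (n+1))) :
    vproj n (c • x) = c • vproj n x := rfl

lemma vproj_sub (x y : EuclideanSpace ℝ (Fin (n+1))) :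
    vproj n (x - y) = vproj n x - vproj n y := rfl

lemma last_add (x y : EuclideanSpace ℝ (Fin (n+1))) :
    (x + y) (Fin.last n) = x (Fin.last n) + y (Fin.last n) := rfl

lemma last_smul (c : ℝ) (x : EuclideanSpace ℝ (Fin (n+1))) :
    (c • x) (Fin.last n) = c * x (Fin.last n) := rfl

lemma vproj_ed : vproj n (ed n) = 0 := by
  ext j
  simp only [vproj_apply, ed, EuclideanSpace.single_apply]
  rw [if_neg (Fin.castSucc_lt_last j).ne]
  rfl

lemma ed_last : ed n (Fin.last n) = 1 := by
  simp [ed, EuclideanSpace.single_apply]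

lemma inner_split (u x : EuclideanSpace ℝ (Fin (n+1))) :
    ⟪u, x⟫ = ⟪vproj n u, vproj n x⟫ + u (Fin.last n) * x (Fin.last n) := by
  simp only [PiLp.inner_apply, RCLike.inner_apply, conj_trivial]
  rw [Fin.sum_univ_castSucc]
  simp only [vproj_apply]; ring

lemma inner_ed_right (u : EuclideanSpace ℝ (Fin (n+1))) :
    ⟪u, ed n⟫ = u (Fin.last n) := by
  rw [inner_split, vproj_ed, inner_zero_right, ed_last, zero_add, mul_one]

lemma vlift_add_ed (y : EuclideanSpace ℝ (Fin n)) (t s : ℝ) :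
    vlift n y t + s • ed n = vlift n y (t + s) := by
  ext i
  induction i using Fin.lastCases with
  | last =>
    show vlift n y t (Fin.last n) + s * ed n (Fin.last n) = _
    rw [vlift_last, vlift_last, ed_last, mul_one]
  | cast j =>
    show vlift n y t j.castSucc + s * ed n j.castSucc = _
    rw [vlift_castSucc, vlift_castSucc]
    simp only [ed, EuclideanSpace.single_apply, if_neg (Fin.castSucc_lt_last j).ne, mul_zero,
      add_zero]

end StabAux
namespace StabAux

variable {n : ℕ}

/-- `vlift` as a linear map from the product. -/
def vliftL (n : ℕ) : (EuclideanSpace ℝ (Fin n)) × ℝ →ₗ[ℝ] EuclideanSpace ℝ (Fin (n+1)) where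
  toFun p := vlift n p.1 p.2
  map_add' p q := by
    ext i
    induction i using Fin.lastCases with
    | last =>
      show _ = vlift n p.1 p.2 (Fin.last n) + vlift n q.1 q.2 (Fin.last n)
      simp [vlift_last]
    | cast j =>
      show _ = vlift n p.1 p.2 j.castSucc + vlift n q.1 q.2 j.castSucc
      simp [vlift_castSucc]
  map_smul' c p := by
    ext i
    induction i using Fin.lastCases with
    | last =>
      show _ = c * vlift n p.1 p.2 (Fin.last n)
      simp [vlift_last]
    | cast j =>
      show _ = c * vlift n p.1 p.2 j.castSucc
      simp [vlift_castSucc]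

lemma continuous_vlift2 : Continuous (fun p : (EuclideanSpace ℝ (Fin n)) × ℝ =>
    vlift n p.1 p.2) :=
  (vliftL n).continuous_of_finiteDimensional

def vprojL (n : ℕ) : EuclideanSpace ℝ (Fin (n+1)) →ₗ[ℝ] EuclideanSpace ℝ (Fin n) where
  toFun := vproj n
  map_add' := vproj_add
  map_smul' := vproj_smul

lemma continuous_vproj : Continuous (vproj n) := (vprojL n).continuous_of_finiteDimensional

def lastL (n : ℕ) : EuclideanSpace ℝ (Fin (n+1)) →ₗ[ℝ] ℝ where
  toFun x := x (Fin.last n)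
  map_add' x y := rfl
  map_smul' c x := rfl

lemma continuous_last : Continuous (fun x : EuclideanSpace ℝ (Fin (n+1)) => x (Fin.last n)) :=
  (lastL n).continuous_of_finiteDimensional

/-- The coordinate-splitting map, measure preserving. -/
def splitMap (n : ℕ) (y : EuclideanSpace ℝ (Fin (n+1))) :
    (EuclideanSpace ℝ (Fin n)) × ℝ := (vproj n y, y (Fin.last n))

lemma continuous_splitMap : Continuous (splitMap n) :=
  continuous_vproj.prodMk continuous_last

lemma measurePreserving_swap' :
    MeasurePreserving (Prod.swap : ℝ × (Fin n → ℝ) → (Fin n → ℝ) × ℝ) volume volume := by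
  rw [Measure.volume_eq_prod, Measure.volume_eq_prod]
  exact Measure.measurePreserving_swap

lemma measurePreserving_splitMap :
    MeasurePreserving (splitMap n) volume volume := by
  have e1 := EuclideanSpace.volume_preserving_symm_measurableEquiv_toLp (Fin (n+1))
  have e2 := MeasureTheory.volume_preserving_piFinSuccAbove (fun _ : Fin (n+1) => ℝ) (Fin.last n)
  have e3 : MeasurePreserving (Prod.swap : ℝ × (Fin n → ℝ) → (Fin n → ℝ) × ℝ) volume volume :=
    measurePreserving_swap'
  have e4 : MeasurePreserving
      (Prod.map (MeasurableEquiv.toLp 2 (Fin n → ℝ)) (id : ℝ → ℝ)) volume volume := by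
    rw [Measure.volume_eq_prod, Measure.volume_eq_prod]
    exact ((EuclideanSpace.volume_preserving_symm_measurableEquiv_toLp (Fin n)).symm).prod
      (MeasurePreserving.id _)
  have := ((e4.comp e3).comp e2).comp e1
  convert this using 1
  · rfl
  funext y
  show (vproj n y, y (Fin.last n)) = _
  have : ∀ j : Fin n, y ((Fin.last n).succAbove j) = y j.castSucc := by
    intro j; rw [Fin.succAbove_last]
  apply Prod.ext
  · show vproj n y = (MeasurableEquiv.toLp 2 (Fin n → ℝ))
      (fun j => y ((Fin.last n).succAbove j))
    ext j
    show y j.castSucc = y ((Fin.last n).succAbove j)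
    rw [this j]
  · rfl

/-- Fiberwise volume formula. -/
lemma volume_eq_fibers (S : Set (EuclideanSpace ℝ (Fin (n+1)))) (hS : MeasurableSet S) :
    volume S = ∫⁻ w : EuclideanSpace ℝ (Fin n), volume {t : ℝ | vlift n w t ∈ S} := by
  have hA : MeasurableSet {p : (EuclideanSpace ℝ (Fin n)) × ℝ | vlift n p.1 p.2 ∈ S} :=
    (continuous_vlift2.measurable) hS
  have h1 : volume S =
      volume {p : (EuclideanSpace ℝ (Fin n)) × ℝ | vlift n p.1 p.2 ∈ S} := by
    have := measurePreserving_splitMap (n := n)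
    have hpre : splitMap n ⁻¹' {p : (EuclideanSpace ℝ (Fin n)) × ℝ | vlift n p.1 p.2 ∈ S} = S := by
      ext y
      show vlift n (vproj n y) (y (Fin.last n)) ∈ S ↔ y ∈ S
      rw [vlift_eta]
    calc volume S = volume (splitMap n ⁻¹' {p : (EuclideanSpace ℝ (Fin n)) × ℝ |
        vlift n p.1 p.2 ∈ S}) := by rw [hpre]
      _ = _ := this.measure_preimage hA.nullMeasurableSet
  rw [h1, Measure.volume_eq_prod, Measure.prod_apply hA]
  rfl

end StabAux
namespace StabAux

variable {n : ℕ} {K : Set (EuclideanSpace ℝ (Fin (n+1)))}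

lemma mem_SK_iff {x : EuclideanSpace ℝ (Fin (n+1))} :
    x ∈ SK K ↔ ∀ u ∈ downDirs n, ⟪u, x⟫ ≤ suppFn K u := by
  simp [SK, Set.mem_iInter]

lemma neg_ed_mem_downDirs : -ed n ∈ downDirs n := by
  constructor
  · rw [norm_neg, ed, EuclideanSpace.norm_single, norm_one]
  · intro j
    have h1 : (-ed n) j.castSucc = 0 := by
      show -(ed n j.castSucc) = 0
      simp [ed, EuclideanSpace.single_apply, (Fin.castSucc_lt_last j).ne]
    have h2 : (-ed n) (Fin.last n) = -1 := by
      show -(ed n (Fin.last n)) = -1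
      rw [ed_last]
    rw [h1, h2]; norm_num

lemma downDirs_last_nonpos (hn : 1 ≤ n) {u : EuclideanSpace ℝ (Fin (n+1))}
    (hu : u ∈ downDirs n) : u (Fin.last n) ≤ 0 := by
  have := hu.2 ⟨0, hn⟩
  have h0 : (0:ℝ) ≤ |u (Fin.castSucc ⟨0, hn⟩)| := abs_nonneg _
  linarith

lemma K_subset_SK (hK : IsCompact K) : K ⊆ SK K := by
  intro x hx
  rw [mem_SK_iff]
  intro u _
  exact le_csSup ((hK.image (Continuous.inner continuous_const continuous_id)).bddAbove)
    (Set.mem_image_of_mem _ hx)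

lemma SK_closed : IsClosed (SK K) := by
  refine isClosed_biInter fun u _ => ?_
  exact isClosed_le (Continuous.inner continuous_const continuous_id) continuous_const

lemma SK_convex : Convex ℝ (SK K) := by
  refine convex_iInter₂ fun u _ => ?_
  exact convex_halfSpace_le ⟨fun a b => inner_add_right u a b, fun c a => by
    rw [real_inner_smul_right]; rfl⟩ _

lemma mem_SK_le (hx : x ∈ SK K) {u} (hu : u ∈ downDirs n) : ⟪u, x⟫ ≤ suppFn K u :=
  mem_SK_iff.1 hx u hu

lemma SK_upward (hn : 1 ≤ n) {x : EuclideanSpace ℝ (Fin (n+1))} (hx : x ∈ SK K) {s : ℝ}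
    (hs : 0 ≤ s) : x + s • ed n ∈ SK K := by
  rw [mem_SK_iff]
  intro u hu
  rw [inner_add_right, real_inner_smul_right, inner_ed_right]
  have := downDirs_last_nonpos hn hu
  have h2 := mem_SK_le hx hu
  nlinarith

lemma SK_translate_single {x : EuclideanSpace ℝ (Fin (n+1))} (hx : x ∈ SK K) (j : Fin n)
    (r : ℝ) :
    vlift n (vproj n x + r • EuclideanSpace.single j 1) (x (Fin.last n) + |r|) ∈ SK K := by
  have hdec : vlift n (vproj n x + r • EuclideanSpace.single j 1) (x (Fin.last n) + |r|)
      = x + vlift n (r • EuclideanSpace.single j 1) |r| := by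
    have := (vliftL n).map_add (vproj n x, x (Fin.last n)) (r • EuclideanSpace.single j 1, |r|)
    simp only [vliftL, LinearMap.coe_mk, AddHom.coe_mk] at this
    rw [show ((vproj n x, x (Fin.last n)) + (r • EuclideanSpace.single j 1, |r|))
      = (vproj n x + r • EuclideanSpace.single j 1, x (Fin.last n) + |r|) from rfl] at this
    rw [this, vlift_eta]
  rw [mem_SK_iff]
  intro u hu
  rw [hdec, inner_add_right]
  have key : ⟪u, vlift n (r • EuclideanSpace.single j 1) |r|⟫ ≤ 0 := by
    rw [inner_split, vproj_vlift, vlift_last]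
    have h1 : ⟪vproj n u, r • EuclideanSpace.single j 1⟫ = r * (vproj n u j) := by
      rw [real_inner_smul_right]
      have : ⟪vproj n u, (EuclideanSpace.single j (1:ℝ))⟫ = vproj n u j := by
        rw [EuclideanSpace.inner_single_right]; simp
      rw [this]
    rw [h1]
    have h2 : r * vproj n u j ≤ |r| * |u j.castSucc| := by
      rw [vproj_apply]
      calc r * u j.castSucc ≤ |r * u j.castSucc| := le_abs_self _
        _ = |r| * |u j.castSucc| := abs_mul _ _
    have h3 : |u j.castSucc| ≤ -u (Fin.last n) := hu.2 j
    nlinarith [abs_nonneg r]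
  have := mem_SK_le hx hu
  linarith

lemma SK_translate {x : EuclideanSpace ℝ (Fin (n+1))} (hx : x ∈ SK K)
    (a : EuclideanSpace ℝ (Fin n)) :
    vlift n (vproj n x + a) (x (Fin.last n) + ∑ j, |a j|) ∈ SK K := by
  have key : ∀ s : Finset (Fin n),
      vlift n (vproj n x + ∑ j ∈ s, a j • EuclideanSpace.single j 1)
        (x (Fin.last n) + ∑ j ∈ s, |a j|) ∈ SK K := by
    intro s
    induction s using Finset.induction with
    | empty => simpa [vlift_eta] using hx
    | @insert j s hj ih =>
      have h2 := SK_translate_single ih j (a j)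
      rw [vproj_vlift, vlift_last] at h2
      rw [Finset.sum_insert hj, Finset.sum_insert hj]
      convert h2 using 2
      · abel
      · ring
  have ha : a = ∑ j, a j • EuclideanSpace.single j 1 := by
    ext i
    rw [WithLp.ofLp_sum, Finset.sum_apply]
    have : ∀ j, (a j • EuclideanSpace.single j (1:ℝ)) i = if i = j then a j else 0 := by
      intro j
      show a j * EuclideanSpace.single j (1:ℝ) i = _
      rw [EuclideanSpace.single_apply]
      by_cases h : i = j <;> simp [h]
    simp_rw [this]
    simp
  have := key Finset.univ
  rwa [← ha] at this

end StabAux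
namespace StabAux

variable {n : ℕ} {K : Set (EuclideanSpace ℝ (Fin (n+1)))}

lemma vproj_neg (x : EuclideanSpace ℝ (Fin (n+1))) : vproj n (-x) = -vproj n x := rfl

lemma last_neg (x : EuclideanSpace ℝ (Fin (n+1))) :
    (-x) (Fin.last n) = -(x (Fin.last n)) := rfl

lemma SK_last_lower {x : EuclideanSpace ℝ (Fin (n+1))} (hx : x ∈ SK K) :
    -suppFn K (-ed n) ≤ x (Fin.last n) := by
  have h := mem_SK_le hx neg_ed_mem_downDirs
  have : ⟪-ed n, x⟫ = -(x (Fin.last n)) := by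
    rw [inner_split, vproj_neg, vproj_ed, neg_zero, inner_zero_left, last_neg, ed_last]
    ring
  rw [this] at h
  linarith

lemma closed_fiber (y : EuclideanSpace ℝ (Fin n)) :
    IsClosed {t : ℝ | vlift n y t ∈ SK K} := by
  have : Continuous (fun t : ℝ => vlift n y t) :=
    continuous_vlift2.comp (continuous_const.prodMk continuous_id)
  exact IsClosed.preimage this SK_closed

lemma bddBelow_fiber (y : EuclideanSpace ℝ (Fin n)) :
    BddBelow {t : ℝ | vlift n y t ∈ SK K} := by
  refine ⟨-suppFn K (-ed n), fun t ht => ?_⟩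
  have := SK_last_lower ht
  rwa [vlift_last] at this

lemma nonempty_fiber (hK : IsCompact K) (hne : K.Nonempty) (y : EuclideanSpace ℝ (Fin n)) :
    {t : ℝ | vlift n y t ∈ SK K}.Nonempty := by
  obtain ⟨k, hk⟩ := hne
  have hkSK := K_subset_SK hK hk
  have := SK_translate hkSK (y - vproj n k)
  rw [add_sub_cancel] at this
  exact ⟨_, this⟩

lemma vlift_fK_mem_SK (hK : IsCompact K) (hne : K.Nonempty) (y : EuclideanSpace ℝ (Fin n)) :
    vlift n y (fK K y) ∈ SK K :=
  (closed_fiber y).csInf_mem (nonempty_fiber hK hne y) (bddBelow_fiber y)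

lemma fK_le {y : EuclideanSpace ℝ (Fin n)} {t : ℝ} (h : vlift n y t ∈ SK K) : fK K y ≤ t :=
  csInf_le (bddBelow_fiber y) h

lemma Koplus_mono {α β : ℝ} (h : α ≤ β) : Koplus K α ⊆ Koplus K β :=
  fun _ hy => le_trans hy h

lemma Koplus_translate {α : ℝ} {y : EuclideanSpace ℝ (Fin n)} (hy : y ∈ Koplus K α)
    (a : EuclideanSpace ℝ (Fin n)) : y + a ∈ Koplus K (α + ‖a‖) := by
  have h := Metric.infDist_le_infDist_add_dist (x := y + a) (y := y) (s := vproj n '' K)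
  have hd : dist (y + a) y = ‖a‖ := by
    rw [dist_eq_norm]; congr 1; abel
  rw [hd] at h
  exact le_trans h (add_le_add_left hy _)

lemma Koplus_closed {α : ℝ} : IsClosed (Koplus K α) :=
  isClosed_le (continuous_infDist_pt _) continuous_const

lemma Koplus_convex (hK : IsCompact K) (hne : K.Nonempty) (hconv : Convex ℝ K) {α : ℝ} :
    Convex ℝ (Koplus K α) := by
  intro y₁ h₁ y₂ h₂ c₁ c₂ hc₁ hc₂ hsum
  have himg : IsCompact (vproj n '' K) := hK.image continuous_vproj
  have hines : (vproj n '' K).Nonempty := hne.image _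
  obtain ⟨p₁, hp₁, hd₁⟩ := himg.exists_infDist_eq_dist hines y₁
  obtain ⟨p₂, hp₂, hd₂⟩ := himg.exists_infDist_eq_dist hines y₂
  have hpconv : c₁ • p₁ + c₂ • p₂ ∈ vproj n '' K := by
    have : Convex ℝ (vproj n '' K) := hconv.linear_image (vprojL n)
    exact this hp₁ hp₂ hc₁ hc₂ hsum
  have hle : Metric.infDist (c₁ • y₁ + c₂ • y₂) (vproj n '' K)
      ≤ dist (c₁ • y₁ + c₂ • y₂) (c₁ • p₁ + c₂ • p₂) :=
    Metric.infDist_le_dist_of_mem hpconv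
  have hdist : dist (c₁ • y₁ + c₂ • y₂) (c₁ • p₁ + c₂ • p₂)
      ≤ c₁ * dist y₁ p₁ + c₂ * dist y₂ p₂ := by
    have : c₁ • y₁ + c₂ • y₂ - (c₁ • p₁ + c₂ • p₂) = c₁ • (y₁ - p₁) + c₂ • (y₂ - p₂) := by
      module
    rw [dist_eq_norm, this]
    calc ‖c₁ • (y₁ - p₁) + c₂ • (y₂ - p₂)‖ ≤ ‖c₁ • (y₁ - p₁)‖ + ‖c₂ • (y₂ - p₂)‖ :=
          norm_add_le _ _
      _ = c₁ * dist y₁ p₁ + c₂ * dist y₂ p₂ := by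
          rw [norm_smul, norm_smul, Real.norm_eq_abs, Real.norm_eq_abs, abs_of_nonneg hc₁,
            abs_of_nonneg hc₂, dist_eq_norm, dist_eq_norm]
  show Metric.infDist _ _ ≤ α
  calc Metric.infDist (c₁ • y₁ + c₂ • y₂) (vproj n '' K) ≤ c₁ * dist y₁ p₁ + c₂ * dist y₂ p₂ :=
        le_trans hle hdist
    _ = c₁ * Metric.infDist y₁ (vproj n '' K) + c₂ * Metric.infDist y₂ (vproj n '' K) := by
        rw [hd₁, hd₂]
    _ ≤ c₁ * α + c₂ * α := by
        have := h₁; have := h₂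
        gcongr <;> assumption
    _ = α := by rw [← add_mul, hsum, one_mul]

end StabAux
namespace StabAux

variable {n : ℕ} {K : Set (EuclideanSpace ℝ (Fin (n+1)))} {ε : ℝ}

section U

variable (hK : IsCompact K) (hne : K.Nonempty) (hconv : Convex ℝ K) (hε : 0 < ε)
  (hcube : ∀ x ∈ K, ∀ i, |x i| ≤ 1 - 2*ε)

lemma eps_le_half (hne : K.Nonempty) (hcube : ∀ x ∈ K, ∀ i, |x i| ≤ 1 - 2*ε) : ε ≤ 1/2 := by
  obtain ⟨x, hx⟩ := hne
  have := hcube x hx (Fin.last n)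
  have h0 : (0:ℝ) ≤ |x (Fin.last n)| := abs_nonneg _
  linarith

lemma proj_norm_le (hcube : ∀ x ∈ K, ∀ i, |x i| ≤ 1 - 2*ε) (hε : 0 < ε)
    {p : EuclideanSpace ℝ (Fin n)} (hp : p ∈ vproj n '' K) : ‖p‖ ≤ Real.sqrt n := by
  obtain ⟨k, hk, rfl⟩ := hp
  rw [EuclideanSpace.norm_eq]
  apply Real.sqrt_le_sqrt
  calc ∑ j, ‖vproj n k j‖^2 ≤ ∑ _j : Fin n, (1:ℝ) := by
        apply Finset.sum_le_sum
        intro j _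
        have h1 : |k j.castSucc| ≤ 1 - 2*ε := hcube k hk _
        have h2 : ‖vproj n k j‖ = |k j.castSucc| := rfl
        rw [h2]
        nlinarith [abs_nonneg (k j.castSucc)]
    _ = n := by simp

lemma K_subset_U (hK : IsCompact K) (hε : 0 < ε) : K ⊆ Krestr K (2*ε) := by
  intro x hx
  refine ⟨K_subset_SK hK hx, ?_⟩
  show Metric.infDist (vproj n x) (vproj n '' K) ≤ 2*ε
  have : Metric.infDist (vproj n x) (vproj n '' K) ≤ 0 := by
    rw [← dist_self (vproj n x)]
    exact Metric.infDist_le_dist_of_mem (Set.mem_image_of_mem _ hx)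
  linarith

lemma U_nonempty (hK : IsCompact K) (hne : K.Nonempty) (hε : 0 < ε) :
    (Krestr K (2*ε)).Nonempty := hne.mono (K_subset_U hK hε)

lemma U_closed : IsClosed (Krestr K (2*ε)) :=
  SK_closed.inter (Koplus_closed.preimage continuous_vproj)

lemma U_convex (hK : IsCompact K) (hne : K.Nonempty) (hconv : Convex ℝ K) :
    Convex ℝ (Krestr K (2*ε)) :=
  SK_convex.inter ((Koplus_convex hK hne hconv).linear_preimage (vprojL n))

lemma U_upward (hn : 1 ≤ n) {z : EuclideanSpace ℝ (Fin (n+1))} (hz : z ∈ Krestr K (2*ε))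
    {s : ℝ} (hs : 0 ≤ s) : z + s • ed n ∈ Krestr K (2*ε) := by
  refine ⟨SK_upward hn hz.1 hs, ?_⟩
  show vproj n (z + s • ed n) ∈ Koplus K (2*ε)
  have : vproj n (z + s • ed n) = vproj n z := by
    rw [vproj_add, vproj_smul, vproj_ed, smul_zero, add_zero]
  rw [this]
  exact hz.2

lemma U_proj_bound (hK : IsCompact K) (hne : K.Nonempty) (hε : 0 < ε)
    (hcube : ∀ x ∈ K, ∀ i, |x i| ≤ 1 - 2*ε)
    {z : EuclideanSpace ℝ (Fin (n+1))} (hz : z ∈ Krestr K (2*ε)) :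
    ‖vproj n z‖ ≤ Real.sqrt n + 1 := by
  have himg : IsCompact (vproj n '' K) := hK.image continuous_vproj
  obtain ⟨p, hp, hd⟩ := himg.exists_infDist_eq_dist (hne.image _) (vproj n z)
  have h1 : dist (vproj n z) p ≤ 2*ε := by rw [← hd]; exact hz.2
  have h2 : ‖p‖ ≤ Real.sqrt n := proj_norm_le hcube hε hp
  have h3 : ε ≤ 1/2 := eps_le_half hne hcube
  calc ‖vproj n z‖ ≤ ‖p‖ + dist (vproj n z) p := by
        rw [dist_eq_norm]
        have := norm_add_le p (vproj n z - p)
        simpa using this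
    _ ≤ Real.sqrt n + 1 := by linarith

end U

/-- The "lower boundary function" of the dual body. -/
def Gfn (n : ℕ) (K : Set (EuclideanSpace ℝ (Fin (n+1)))) (ε : ℝ)
    (w : EuclideanSpace ℝ (Fin n)) : ℝ :=
  sSup ((fun z => ⟪w, vproj n z⟫ - z (Fin.last n)) '' Krestr K (2*ε))

lemma mem_Udual_iff {U : Set (EuclideanSpace ℝ (Fin (n+1)))}
    {y : EuclideanSpace ℝ (Fin (n+1))} :
    y ∈ Udual U ↔ ∀ z ∈ U, ⟪vproj n y, vproj n z⟫ - z (Fin.last n) ≤ y (Fin.last n) :=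
  Iff.rfl

lemma Udual_closed {U : Set (EuclideanSpace ℝ (Fin (n+1)))} : IsClosed (Udual U) := by
  have : Udual U = ⋂ z ∈ U, {y : EuclideanSpace ℝ (Fin (n+1)) |
      ⟪vproj n y, vproj n z⟫ - z (Fin.last n) ≤ y (Fin.last n)} := by
    ext y; simp [Udual, Set.mem_iInter]
  rw [this]
  refine isClosed_biInter fun z _ => isClosed_le ?_ continuous_last
  exact (Continuous.inner continuous_vproj continuous_const).sub continuous_const

lemma Udual_convex {U : Set (EuclideanSpace ℝ (Fin (n+1)))} : Convex ℝ (Udual U) := by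
  have : Udual U = ⋂ z ∈ U, {y : EuclideanSpace ℝ (Fin (n+1)) |
      ⟪vproj n y, vproj n z⟫ - y (Fin.last n) ≤ z (Fin.last n)} := by
    ext y
    simp only [Udual, Set.mem_iInter, Set.mem_setOf_eq]
    constructor
    · intro h z hz; have := h z hz; linarith
    · intro h z hz; have := h z hz; linarith
  rw [this]
  refine convex_iInter₂ fun z _ => ?_
  refine convex_halfSpace_le ⟨fun a b => ?_, fun c a => ?_⟩ _
  · rw [vproj_add, inner_add_left, last_add]; ring
  · rw [vproj_smul, real_inner_smul_left, last_smul]; show _ = c * _; ring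

lemma Udual_upward {U : Set (EuclideanSpace ℝ (Fin (n+1)))}
    {y : EuclideanSpace ℝ (Fin (n+1))} (hy : y ∈ Udual U) {s : ℝ} (hs : 0 ≤ s) :
    y + s • ed n ∈ Udual U := by
  intro z hz
  have h1 := hy z hz
  have h2 : vproj n (y + s • ed n) = vproj n y := by
    rw [vproj_add, vproj_smul, vproj_ed, smul_zero, add_zero]
  rw [h2, last_add, last_smul, ed_last]
  nlinarith

end StabAux
namespace StabAux

variable {n : ℕ} {K : Set (EuclideanSpace ℝ (Fin (n+1)))} {ε : ℝ}

lemma bddAbove_Gset (hK : IsCompact K) (hne : K.Nonempty) (hε : 0 < ε)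
    (hcube : ∀ x ∈ K, ∀ i, |x i| ≤ 1 - 2*ε) (w : EuclideanSpace ℝ (Fin n)) :
    BddAbove ((fun z => ⟪w, vproj n z⟫ - z (Fin.last n)) '' Krestr K (2*ε)) := by
  refine ⟨‖w‖ * (Real.sqrt n + 1) + suppFn K (-ed n), ?_⟩
  rintro v ⟨z, hz, rfl⟩
  have h1 : ⟪w, vproj n z⟫ ≤ ‖w‖ * ‖vproj n z‖ := real_inner_le_norm _ _
  have h2 : ‖vproj n z‖ ≤ Real.sqrt n + 1 := U_proj_bound hK hne hε hcube hz
  have h3 : -suppFn K (-ed n) ≤ z (Fin.last n) := SK_last_lower hz.1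
  have h4 : ‖w‖ * ‖vproj n z‖ ≤ ‖w‖ * (Real.sqrt n + 1) :=
    mul_le_mul_of_nonneg_left h2 (norm_nonneg w)
  simp only [Set.mem_setOf_eq]
  linarith

lemma Gset_nonempty (hK : IsCompact K) (hne : K.Nonempty) (hε : 0 < ε)
    (w : EuclideanSpace ℝ (Fin n)) :
    ((fun z => ⟪w, vproj n z⟫ - z (Fin.last n)) '' Krestr K (2*ε)).Nonempty :=
  (U_nonempty hK hne hε).image _

variable (hK : IsCompact K) (hne : K.Nonempty) (hε : 0 < ε)
  (hcube : ∀ x ∈ K, ∀ i, |x i| ≤ 1 - 2*ε)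

include hK hne hε hcube in
lemma le_Gfn {z : EuclideanSpace ℝ (Fin (n+1))} (hz : z ∈ Krestr K (2*ε))
    (w : EuclideanSpace ℝ (Fin n)) :
    ⟪w, vproj n z⟫ - z (Fin.last n) ≤ Gfn n K ε w :=
  le_csSup (bddAbove_Gset hK hne hε hcube w) (Set.mem_image_of_mem _ hz)

include hK hne hε in
lemma Gfn_le_of_mem {y : EuclideanSpace ℝ (Fin (n+1))} (hy : y ∈ Udual (Krestr K (2*ε))) :
    Gfn n K ε (vproj n y) ≤ y (Fin.last n) := by
  apply csSup_le (Gset_nonempty hK hne hε _)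
  rintro v ⟨z, hz, rfl⟩
  exact hy z hz

include hK hne hε hcube in
lemma graph_mem_Udual (w : EuclideanSpace ℝ (Fin n)) :
    vlift n w (Gfn n K ε w) ∈ Udual (Krestr K (2*ε)) := by
  intro z hz
  rw [vproj_vlift, vlift_last]
  exact le_Gfn hK hne hε hcube hz w

include hK hne hε hcube in
lemma graph_mem_frontier (w : EuclideanSpace ℝ (Fin n)) :
    vlift n w (Gfn n K ε w) ∈ frontier (Udual (Krestr K (2*ε))) := by
  rw [Udual_closed.frontier_eq]
  refine ⟨graph_mem_Udual hK hne hε hcube w, ?_⟩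
  intro hint
  obtain ⟨δ, hδ, hball⟩ := Metric.isOpen_iff.1 isOpen_interior _ hint
  set y' := vlift n w (Gfn n K ε w - δ/2) with hy'
  have hdist : dist y' (vlift n w (Gfn n K ε w)) = δ/2 := by
    rw [dist_eq_norm]
    have : y' - vlift n w (Gfn n K ε w) = (-(δ/2)) • ed n := by
      rw [hy']
      have := vlift_add_ed w (Gfn n K ε w) (-(δ/2))
      rw [show Gfn n K ε w + -(δ/2) = Gfn n K ε w - δ/2 by ring] at this
      rw [← this]; abel
    rw [this, norm_smul, Real.norm_eq_abs, ed, EuclideanSpace.norm_single, norm_one, mul_one,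
      abs_of_nonpos (by linarith), neg_neg]
  have hy'mem : y' ∈ Udual (Krestr K (2*ε)) :=
    interior_subset (hball (by rw [Metric.mem_ball, hdist]; linarith))
  have := Gfn_le_of_mem hK hne hε hy'mem
  rw [hy', vproj_vlift, vlift_last] at this
  linarith

include hK hne hε hcube in
lemma Gfn_lsc : LowerSemicontinuous (Gfn n K ε) := by
  intro w a ha
  obtain ⟨v, ⟨z, hz, rfl⟩, hv⟩ := exists_lt_of_lt_csSup (Gset_nonempty hK hne hε w) ha
  have hcont : Continuous (fun w' : EuclideanSpace ℝ (Fin n) =>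
      ⟪w', vproj n z⟫ - z (Fin.last n)) :=
    (Continuous.inner continuous_id continuous_const).sub continuous_const
  have hopen : IsOpen {w' : EuclideanSpace ℝ (Fin n) |
      a < ⟪w', vproj n z⟫ - z (Fin.last n)} := isOpen_lt continuous_const hcont
  filter_upwards [hopen.mem_nhds hv] with w' hw'
  exact lt_of_lt_of_le hw' (le_Gfn hK hne hε hcube hz w')

include hK hne hε hcube in
lemma Gfn_measurable : Measurable (Gfn n K ε) :=
  (Gfn_lsc hK hne hε hcube).measurable

/-- The affine "tangent plane" functional attached to `q`. -/
def plane (n : ℕ) (q : EuclideanSpace ℝ (Fin (n+1))) (w : EuclideanSpace ℝ (Fin n)) : ℝ :=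
  ⟪vproj n q, w⟫ - q (Fin.last n)

/-- Height of `y` above the plane of `q`. -/
def hgt (n : ℕ) (q y : EuclideanSpace ℝ (Fin (n+1))) : ℝ :=
  y (Fin.last n) - plane n q (vproj n y)

lemma hgt_nonneg {q y : EuclideanSpace ℝ (Fin (n+1))} (hq : q ∈ Krestr K (2*ε))
    (hy : y ∈ Udual (Krestr K (2*ε))) : 0 ≤ hgt n q y := by
  have := hy q hq
  have hc : ⟪vproj n y, vproj n q⟫ = ⟪vproj n q, vproj n y⟫ := real_inner_comm _ _
  simp only [hgt, plane]
  linarith [hc ▸ this]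

include hK hne hε hcube in
lemma plane_le_Gfn {q : EuclideanSpace ℝ (Fin (n+1))} (hq : q ∈ Krestr K (2*ε))
    (w : EuclideanSpace ℝ (Fin n)) : plane n q w ≤ Gfn n K ε w := by
  have := le_Gfn hK hne hε hcube hq w
  simp only [plane]
  have hc : ⟪w, vproj n q⟫ = ⟪vproj n q, w⟫ := real_inner_comm _ _
  linarith [hc ▸ this]

lemma hgt_lincomb (q x y : EuclideanSpace ℝ (Fin (n+1))) (a b : ℝ) (hab : a + b = 1) :
    hgt n q (a • x + b • y) = a * hgt n q x + b * hgt n q y := by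
  simp only [hgt, plane, last_add, last_smul, vproj_add, vproj_smul, inner_add_right,
    real_inner_smul_right]
  have : q (Fin.last n) * (a + b) = q (Fin.last n) := by rw [hab, mul_one]
  nlinarith [this]

end StabAux
namespace StabAux

variable {n : ℕ} {K : Set (EuclideanSpace ℝ (Fin (n+1)))} {ε : ℝ}
variable (hK : IsCompact K) (hne : K.Nonempty) (hε : 0 < ε)
  (hcube : ∀ x ∈ K, ∀ i, |x i| ≤ 1 - 2*ε)

include hK hne hε in
lemma lowerBdry_facts {q : EuclideanSpace ℝ (Fin (n+1))} (hq : q ∈ lowerBdry K ε) :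
    q ∈ SK K ∧ vproj n q ∈ Koplus K ε ∧ q ∈ Krestr K (2*ε) := by
  obtain ⟨w, hw, rfl⟩ := hq
  have h1 : vlift n w (fK K w) ∈ SK K := vlift_fK_mem_SK hK hne w
  have h2 : vproj n (vlift n w (fK K w)) ∈ Koplus K ε := by rw [vproj_vlift]; exact hw
  refine ⟨h1, h2, h1, ?_⟩
  exact Koplus_mono (by linarith) h2

include hK hne hε in
lemma cap_cube_bound {q y : EuclideanSpace ℝ (Fin (n+1))} (hq : q ∈ lowerBdry K ε)
    (hy : y ∈ Udual (Krestr K (2*ε))) (hh : hgt n q y ≤ ε) (j : Fin n) :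
    |vproj n y j| ≤ 2 := by
  obtain ⟨hqSK, hqKo, hqU⟩ := lowerBdry_facts hK hne hε hq
  have key : ∀ r : ℝ, |r| = ε → r * vproj n y j ≤ 2 * ε := by
    intro r hr
    have hz : vlift n (vproj n q + r • EuclideanSpace.single j 1)
        (q (Fin.last n) + |r|) ∈ SK K := SK_translate_single hqSK j r
    have hzU : vlift n (vproj n q + r • EuclideanSpace.single j 1)
        (q (Fin.last n) + |r|) ∈ Krestr K (2*ε) := by
      refine ⟨hz, ?_⟩
      show vproj n _ ∈ Koplus K (2*ε)
      rw [vproj_vlift]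
      have := Koplus_translate hqKo (r • EuclideanSpace.single j 1)
      have hnorm : ‖r • EuclideanSpace.single j (1:ℝ)‖ = ε := by
        rw [norm_smul, EuclideanSpace.norm_single, norm_one, mul_one, Real.norm_eq_abs, hr]
      rw [hnorm] at this
      rwa [show ε + ε = 2*ε by ring] at this
    have hcon := hy _ hzU
    rw [vproj_vlift, vlift_last] at hcon
    rw [inner_add_right, real_inner_smul_right] at hcon
    have hsing : ⟪vproj n y, (EuclideanSpace.single j (1:ℝ))⟫ = vproj n y j := by
      rw [EuclideanSpace.inner_single_right]; simp
    rw [hsing, hr] at hcon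
    have hh' : y (Fin.last n) ≤ ⟪vproj n q, vproj n y⟫ - q (Fin.last n) + ε := by
      simp only [hgt, plane] at hh; linarith
    have hc : ⟪vproj n y, vproj n q⟫ = ⟪vproj n q, vproj n y⟫ := real_inner_comm _ _
    nlinarith [hc]
  have h1 := key ε (abs_of_pos hε)
  have h2 := key (-ε) (by rw [abs_neg, abs_of_pos hε])
  rw [abs_le]
  constructor <;> nlinarith

/-- The thin slab containing all relevant caps. -/
def Slab (n : ℕ) (K : Set (EuclideanSpace ℝ (Fin (n+1)))) (ε : ℝ) :
    Set (EuclideanSpace ℝ (Fin (n+1))) :=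
  {y | (∀ j, |vproj n y j| ≤ 2) ∧
    y (Fin.last n) ∈ Set.Icc (Gfn n K ε (vproj n y)) (Gfn n K ε (vproj n y) + ε)}

include hK hne hε hcube in
lemma cap_subset_Slab {q : EuclideanSpace ℝ (Fin (n+1))} (hq : q ∈ lowerBdry K ε) :
    (Udual (Krestr K (2*ε)) ∩ {y | hgt n q y ≤ ε}) ⊆ Slab n K ε := by
  rintro y ⟨hyV, hyh⟩
  refine ⟨fun j => cap_cube_bound hK hne hε hq hyV hyh j, ?_⟩
  have hqU := (lowerBdry_facts hK hne hε hq).2.2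
  constructor
  · exact Gfn_le_of_mem hK hne hε hyV
  · have h1 : plane n q (vproj n y) ≤ Gfn n K ε (vproj n y) :=
      plane_le_Gfn hK hne hε hcube hqU _
    simp only [Set.mem_setOf_eq, hgt] at hyh
    linarith

include hK hne hε hcube in
lemma Slab_measurable : MeasurableSet (Slab n K ε) := by
  have h1 : MeasurableSet {y : EuclideanSpace ℝ (Fin (n+1)) | ∀ j, |vproj n y j| ≤ 2} := by
    have : IsClosed {y : EuclideanSpace ℝ (Fin (n+1)) | ∀ j, |vproj n y j| ≤ 2} := by
      have : {y : EuclideanSpace ℝ (Fin (n+1)) | ∀ j, |vproj n y j| ≤ 2}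
          = ⋂ j, {y | |vproj n y j| ≤ 2} := by ext y; simp [Set.mem_iInter]
      rw [this]
      refine isClosed_iInter fun j => isClosed_le ?_ continuous_const
      exact ((continuous_apply j).comp ((PiLp.continuous_ofLp 2 _).comp continuous_vproj)).abs
    exact this.measurableSet
  have hG : Measurable (fun y : EuclideanSpace ℝ (Fin (n+1)) => Gfn n K ε (vproj n y)) :=
    (Gfn_measurable hK hne hε hcube).comp continuous_vproj.measurable
  have h2 : MeasurableSet {y : EuclideanSpace ℝ (Fin (n+1)) |
      y (Fin.last n) ∈ Set.Icc (Gfn n K ε (vproj n y)) (Gfn n K ε (vproj n y) + ε)} := by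
    have ha : MeasurableSet {y : EuclideanSpace ℝ (Fin (n+1)) |
        Gfn n K ε (vproj n y) ≤ y (Fin.last n)} :=
      measurableSet_le hG continuous_last.measurable
    have hb : MeasurableSet {y : EuclideanSpace ℝ (Fin (n+1)) |
        y (Fin.last n) ≤ Gfn n K ε (vproj n y) + ε} :=
      measurableSet_le continuous_last.measurable (hG.add_const ε)
    have heq : {y : EuclideanSpace ℝ (Fin (n+1)) |
        y (Fin.last n) ∈ Set.Icc (Gfn n K ε (vproj n y)) (Gfn n K ε (vproj n y) + ε)}
        = {y | Gfn n K ε (vproj n y) ≤ y (Fin.last n)} ∩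
          {y | y (Fin.last n) ≤ Gfn n K ε (vproj n y) + ε} := by
      ext y; simp only [Set.mem_Icc, Set.mem_inter_iff, Set.mem_setOf_eq]
    rw [heq]; exact ha.inter hb
  exact h1.inter h2

include hK hne hε hcube in
lemma Slab_volume : volume (Slab n K ε) ≤ ENNReal.ofReal ε * (ENNReal.ofReal 4)^n := by
  rw [volume_eq_fibers _ (Slab_measurable hK hne hε hcube)]
  set Cb : Set (EuclideanSpace ℝ (Fin n)) := {w | ∀ j, w j ∈ Set.Icc (-2:ℝ) 2} with hCb
  have hfib : ∀ w, volume {t : ℝ | vlift n w t ∈ Slab n K ε}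
      ≤ Cb.indicator (fun _ => ENNReal.ofReal ε) w := by
    intro w
    by_cases hw : w ∈ Cb
    · rw [Set.indicator_of_mem hw]
      have : {t : ℝ | vlift n w t ∈ Slab n K ε}
          ⊆ Set.Icc (Gfn n K ε w) (Gfn n K ε w + ε) := by
        intro t ht
        have := ht.2
        rwa [vproj_vlift, vlift_last] at this
      calc volume {t : ℝ | vlift n w t ∈ Slab n K ε} ≤ _ := measure_mono this
        _ = ENNReal.ofReal ε := by rw [Real.volume_Icc]; congr 1; ring
    · rw [Set.indicator_of_notMem hw]
      have : {t : ℝ | vlift n w t ∈ Slab n K ε} = ∅ := by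
        ext t
        simp only [Set.mem_setOf_eq, Set.mem_empty_iff_false, iff_false]
        intro ht
        apply hw
        intro j
        have := ht.1 j
        rw [vproj_vlift] at this
        exact Set.mem_Icc.2 (abs_le.1 this)
      simp [this]
  calc ∫⁻ w, volume {t : ℝ | vlift n w t ∈ Slab n K ε}
      ≤ ∫⁻ w, Cb.indicator (fun _ => ENNReal.ofReal ε) w := lintegral_mono hfib
    _ = ENNReal.ofReal ε * volume Cb := by
        have hCbm : MeasurableSet Cb := by
          have : IsClosed Cb := by
            have : Cb = ⋂ j, {w : EuclideanSpace ℝ (Fin n) | w j ∈ Set.Icc (-2:ℝ) 2} := by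
              ext w; simp [hCb, Set.mem_iInter]
            rw [this]
            exact isClosed_iInter fun j => (isClosed_Icc).preimage ((continuous_apply j).comp (PiLp.continuous_ofLp 2 _))
          exact this.measurableSet
        rw [lintegral_indicator hCbm, setLIntegral_const, mul_comm]
    _ ≤ ENNReal.ofReal ε * (ENNReal.ofReal 4)^n := by
        apply mul_le_mul_right
        have hpre : Cb = (MeasurableEquiv.toLp 2 (Fin n → ℝ)).symm ⁻¹'
            (Set.univ.pi fun _ => Set.Icc (-2:ℝ) 2) := by
          ext w
          simp only [hCb, Set.mem_setOf_eq, Set.mem_preimage, Set.mem_pi, Set.mem_univ,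
            forall_true_left, Set.mem_Icc]
          rfl
        have := (EuclideanSpace.volume_preserving_symm_measurableEquiv_toLp (Fin n)).measure_preimage
          (s := Set.univ.pi fun _ => Set.Icc (-2:ℝ) 2)
          (MeasurableSet.univ_pi fun _ => measurableSet_Icc).nullMeasurableSet
        rw [hpre, this, volume_pi_pi]
        rw [Real.volume_Icc]
        rw [show (2:ℝ) - (-2) = 4 by ring]
        rw [Finset.prod_const]
        simp
end StabAux
namespace StabAux

variable {W : Type*} [AddCommGroup W] [Module ℝ W]

/-- Macbeath region of `C` at `x`. -/
def Mreg (C : Set W) (x : W) : Set W := C ∩ {y | (2:ℝ) • x - y ∈ C}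

/-- Half-scaled Macbeath region. -/
def MregHalf (C : Set W) (x : W) : Set W := {z | (2:ℝ) • z - x ∈ Mreg C x}

lemma Mreg_subset (C : Set W) (x : W) : Mreg C x ⊆ C := Set.inter_subset_left

lemma mem_Mreg_self {C : Set W} {x : W} (hx : x ∈ C) : x ∈ Mreg C x := by
  refine ⟨hx, ?_⟩
  show (2:ℝ) • x - x ∈ C
  have : (2:ℝ) • x - x = x := by module
  rwa [this]

lemma mem_MregHalf_self {C : Set W} {x : W} (hx : x ∈ C) : x ∈ MregHalf C x := by
  show (2:ℝ) • x - x ∈ Mreg C x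
  have : (2:ℝ) • x - x = x := by module
  rw [this]
  exact mem_Mreg_self hx

lemma MregHalf_subset_Mreg {C : Set W} (hC : Convex ℝ C) {x : W} (hx : x ∈ C) :
    MregHalf C x ⊆ Mreg C x := by
  intro z hz
  obtain ⟨hm1, hm2⟩ := hz
  set m := (2:ℝ) • z - x with hm
  have hzmid : z = (1/2:ℝ) • x + (1/2:ℝ) • m := by rw [hm]; module
  have hz1 : z ∈ C := by
    rw [hzmid]; exact hC hx hm1 (by norm_num) (by norm_num) (by norm_num)
  refine ⟨hz1, ?_⟩
  show (2:ℝ) • x - z ∈ C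
  have h2 : (2:ℝ) • x - z = (1/2:ℝ) • x + (1/2:ℝ) • ((2:ℝ) • x - m) := by rw [hm]; module
  rw [h2]
  exact hC hx hm2 (by norm_num) (by norm_num) (by norm_num)

/-- Macbeath's lemma: if the half regions at `x` and `y` meet, then the point
`(x + 4y)/5` lies in the (full) Macbeath region at `y`. -/
lemma macbeath {C : Set W} (hC : Convex ℝ C) {x y : W} (hx : x ∈ C) (hy : y ∈ C)
    (hne : (MregHalf C x ∩ MregHalf C y).Nonempty) :
    (1/5:ℝ) • x + (4/5:ℝ) • y ∈ Mreg C y := by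
  obtain ⟨z, hzx, hzy⟩ := hne
  set u' := (2:ℝ) • z - x with hu'
  set v' := (2:ℝ) • z - y with hv'
  have hu'C : u' ∈ C := hzx.1
  have hu''C : (2:ℝ) • x - u' ∈ C := hzx.2
  have hv'C : v' ∈ C := hzy.1
  have hv''C : (2:ℝ) • y - v' ∈ C := hzy.2
  constructor
  · exact hC hx hy (by norm_num) (by norm_num) (by norm_num)
  · show (2:ℝ) • y - ((1/5:ℝ) • x + (4/5:ℝ) • y) ∈ C
    have key : (2:ℝ) • y - ((1/5:ℝ) • x + (4/5:ℝ) • y)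
        = (3/5:ℝ) • y + (1/5:ℝ) • ((2:ℝ) • y - v') + (1/5:ℝ) • u' := by
      rw [hu', hv']; module
    rw [key]
    have step1 : (1/2:ℝ) • ((2:ℝ) • y - v') + (1/2:ℝ) • u' ∈ C :=
      hC hv''C hu'C (by norm_num) (by norm_num) (by norm_num)
    have step2 : (3/5:ℝ) • y + (2/5:ℝ) • ((1/2:ℝ) • ((2:ℝ) • y - v') + (1/2:ℝ) • u') ∈ C :=
      hC hy step1 (by norm_num) (by norm_num) (by norm_num)
    have : (3/5:ℝ) • y + (1/5:ℝ) • ((2:ℝ) • y - v') + (1/5:ℝ) • u'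
        = (3/5:ℝ) • y + (2/5:ℝ) • ((1/2:ℝ) • ((2:ℝ) • y - v') + (1/2:ℝ) • u') := by module
    rw [this]
    exact step2

end StabAux

namespace StabAux

variable {m : ℕ}

lemma homothety_half_apply (x w : EuclideanSpace ℝ (Fin m)) :
    AffineMap.homothety x (1/2:ℝ) w = x + (1/2:ℝ) • (w - x) := by
  rw [AffineMap.homothety_apply]
  show (1/2:ℝ) • (w - x) + x = x + (1/2:ℝ) • (w - x)
  abel

lemma MregHalf_eq_homothety_image (C : Set (EuclideanSpace ℝ (Fin m)))
    (x : EuclideanSpace ℝ (Fin m)) :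
    MregHalf C x = AffineMap.homothety x (1/2:ℝ) '' (Mreg C x) := by
  ext z
  constructor
  · intro hz
    refine ⟨(2:ℝ) • z - x, hz, ?_⟩
    rw [homothety_half_apply]
    module
  · rintro ⟨w, hw, rfl⟩
    show (2:ℝ) • (AffineMap.homothety x (1/2:ℝ) w) - x ∈ Mreg C x
    rw [homothety_half_apply]
    have : (2:ℝ) • (x + (1/2:ℝ) • (w - x)) - x = w := by module
    rwa [this]

lemma volume_MregHalf (C : Set (EuclideanSpace ℝ (Fin m))) (x : EuclideanSpace ℝ (Fin m)) :
    volume (MregHalf C x) = ENNReal.ofReal ((1/2:ℝ)^m) * volume (Mreg C x) := by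
  rw [MregHalf_eq_homothety_image, Measure.addHaar_image_homothety]
  congr 2
  rw [abs_of_nonneg (by positivity)]
  congr 1
  exact finrank_euclideanSpace_fin

/-- Averaging: some point of `T` has a large Macbeath region relative to `T`. -/
lemma exists_good_center (T : Set (EuclideanSpace ℝ (Fin m))) (hTc : IsClosed T)
    (hconv : Convex ℝ T) (h0 : volume T ≠ 0) (hfin : volume T ≠ ⊤) :
    ∃ x ∈ T, ENNReal.ofReal ((1/2:ℝ)^(m+1)) * volume T
      ≤ volume (T ∩ {y | (2:ℝ) • x - y ∈ T}) := by
  by_contra hcon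
  push_neg at hcon
  set Wst : Set (EuclideanSpace ℝ (Fin m) × EuclideanSpace ℝ (Fin m)) :=
    {p | p.1 ∈ T ∧ p.2 ∈ T ∧ (2:ℝ) • p.1 - p.2 ∈ T} with hWst
  have hWclosed : IsClosed Wst := by
    refine IsClosed.inter (hTc.preimage continuous_fst) (IsClosed.inter
      (hTc.preimage continuous_snd) (hTc.preimage ?_))
    exact (continuous_fst.const_smul (2:ℝ)).sub continuous_snd
  have hWm : MeasurableSet Wst := hWclosed.measurableSet
  have hTm : MeasurableSet T := hTc.measurableSet
  set A := (volume.prod volume) Wst with hA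
  have step1 : A = ENNReal.ofReal ((1/2:ℝ)^m) * volume T * volume T := by
    rw [hA, Measure.prod_apply_symm hWm]
    have hfib : ∀ y, volume ((fun x => (x, y)) ⁻¹' Wst)
        = T.indicator (fun _ => ENNReal.ofReal ((1/2:ℝ)^m) * volume T) y := by
      intro y
      by_cases hy : y ∈ T
      · rw [Set.indicator_of_mem hy]
        have heq : ((fun x => (x, y)) ⁻¹' Wst)
            = AffineMap.homothety y (1/2:ℝ) '' T := by
          ext x
          simp only [Set.mem_preimage, hWst, Set.mem_setOf_eq]
          constructor
          · rintro ⟨hx1, _, hx3⟩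
            refine ⟨(2:ℝ) • x - y, hx3, ?_⟩
            show AffineMap.homothety y (1/2:ℝ) ((2:ℝ) • x - y) = x
            rw [homothety_half_apply]
            module
          · rintro ⟨w, hw, rfl⟩
            show AffineMap.homothety y (1/2:ℝ) w ∈ T ∧ y ∈ T ∧
              (2:ℝ) • (AffineMap.homothety y (1/2:ℝ) w) - y ∈ T
            rw [homothety_half_apply]
            have h2 : (2:ℝ) • (y + (1/2:ℝ) • (w - y)) - y = w := by module
            have hmidT : y + (1/2:ℝ) • (w - y) ∈ T := by
              have hmid : y + (1/2:ℝ) • (w - y) = (1/2:ℝ) • y + (1/2:ℝ) • w := by module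
              rw [hmid]
              exact hconv hy hw (by norm_num) (by norm_num) (by norm_num)
            exact ⟨hmidT, hy, by rw [h2]; exact hw⟩
        rw [heq, Measure.addHaar_image_homothety]
        congr 2
        rw [abs_of_nonneg (by positivity)]
        congr 1
        exact finrank_euclideanSpace_fin
      · rw [Set.indicator_of_notMem hy]
        have : ((fun x => (x, y)) ⁻¹' Wst) = ∅ := by
          ext x; simp only [Set.mem_preimage, hWst, Set.mem_setOf_eq, Set.mem_empty_iff_false,
            iff_false]
          rintro ⟨_, h2, _⟩; exact hy h2
        rw [this]; simp
    calc ∫⁻ y, volume ((fun x => (x, y)) ⁻¹' Wst)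
        = ∫⁻ y, T.indicator (fun _ => ENNReal.ofReal ((1/2:ℝ)^m) * volume T) y := by
          exact lintegral_congr hfib
      _ = ENNReal.ofReal ((1/2:ℝ)^m) * volume T * volume T := by
          rw [lintegral_indicator hTm, setLIntegral_const]
  have step2 : A ≤ ENNReal.ofReal ((1/2:ℝ)^(m+1)) * volume T * volume T := by
    rw [hA, Measure.prod_apply hWm]
    have hfib : ∀ x, volume (Prod.mk x ⁻¹' Wst)
        ≤ T.indicator (fun _ => ENNReal.ofReal ((1/2:ℝ)^(m+1)) * volume T) x := by
      intro x
      by_cases hx : x ∈ T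
      · rw [Set.indicator_of_mem hx]
        have heq : (Prod.mk x ⁻¹' Wst) = T ∩ {y | (2:ℝ) • x - y ∈ T} := by
          ext y
          simp only [Set.mem_preimage, hWst, Set.mem_setOf_eq, Set.mem_inter_iff]
          tauto
        rw [heq]
        exact le_of_lt (hcon x hx)
      · rw [Set.indicator_of_notMem hx]
        have : (Prod.mk x ⁻¹' Wst) = ∅ := by
          ext y; simp only [Set.mem_preimage, hWst, Set.mem_setOf_eq, Set.mem_empty_iff_false,
            iff_false]
          rintro ⟨h1, _, _⟩; exact hx h1
        rw [this]; simp
    calc ∫⁻ x, volume (Prod.mk x ⁻¹' Wst)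
        ≤ ∫⁻ x, T.indicator (fun _ => ENNReal.ofReal ((1/2:ℝ)^(m+1)) * volume T) x :=
          lintegral_mono hfib
      _ = ENNReal.ofReal ((1/2:ℝ)^(m+1)) * volume T * volume T := by
          rw [lintegral_indicator hTm, setLIntegral_const]
  have hlt : ENNReal.ofReal ((1/2:ℝ)^(m+1)) * volume T * volume T
      < ENNReal.ofReal ((1/2:ℝ)^m) * volume T * volume T := by
    have h1 : ENNReal.ofReal ((1/2:ℝ)^(m+1)) < ENNReal.ofReal ((1/2:ℝ)^m) := by
      rw [ENNReal.ofReal_lt_ofReal_iff (by positivity)]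
      rw [pow_succ]
      nlinarith [pow_pos (show (0:ℝ) < 1/2 by norm_num) m]
    have hTT0 : volume T * volume T ≠ 0 := by
      simp [mul_eq_zero, h0]
    have hTTfin : volume T * volume T ≠ ⊤ := ENNReal.mul_ne_top hfin hfin
    calc ENNReal.ofReal ((1/2:ℝ)^(m+1)) * volume T * volume T
        = ENNReal.ofReal ((1/2:ℝ)^(m+1)) * (volume T * volume T) := by ring
      _ < ENNReal.ofReal ((1/2:ℝ)^m) * (volume T * volume T) := by
          exact ENNReal.mul_lt_mul_left hTT0 hTTfin h1
      _ = ENNReal.ofReal ((1/2:ℝ)^m) * volume T * volume T := by ring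
  rw [step1] at step2
  exact absurd step2 (not_le.2 hlt)

end StabAux
namespace StabAux

variable {n : ℕ} {K : Set (EuclideanSpace ℝ (Fin (n+1)))} {ε : ℝ}
variable (hK : IsCompact K) (hne : K.Nonempty) (hconv : Convex ℝ K) (hε : 0 < ε)
  (hcube : ∀ x ∈ K, ∀ i, |x i| ≤ 1 - 2*ε)

include hK hne hconv hε hcube in
/-- Near-tangency point via Hahn–Banach. -/
lemma exists_near_tangent (hn : 1 ≤ n) {q : EuclideanSpace ℝ (Fin (n+1))} (hq : q ∈ lowerBdry K ε)
    {δ : ℝ} (hδ : 0 < δ) :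
    ∃ w₀ : EuclideanSpace ℝ (Fin n), Gfn n K ε w₀ ≤ plane n q w₀ + δ := by
  obtain ⟨w, hw, rfl⟩ := hq
  set q := vlift n w (fK K w) with hqdef
  have hqproj : vproj n q = w := vproj_vlift _ _
  have hqlast : q (Fin.last n) = fK K w := vlift_last _ _
  have hqU : q ∈ Krestr K (2*ε) := (lowerBdry_facts hK hne hε ⟨w, hw, rfl⟩).2.2
  set p₀ := vlift n w (fK K w - δ) with hp₀def
  have hp₀ : p₀ ∉ Krestr K (2*ε) := by
    intro hmem
    have : fK K w ≤ fK K w - δ := fK_le hmem.1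
    linarith
  obtain ⟨f, u, hfp₀, hfU⟩ :=
    geometric_hahn_banach_point_closed (U_convex hK hne hconv) U_closed hp₀
  set v := (InnerProductSpace.toDual ℝ (EuclideanSpace ℝ (Fin (n+1)))).symm f with hv
  have hvf : ∀ x, ⟪v, x⟫ = f x := fun x => InnerProductSpace.toDual_symm_apply
  set b := f (ed n) with hb
  have hq_p₀ : q = p₀ + δ • ed n := by
    rw [hp₀def, vlift_add_ed, hqdef]
    congr 1
    ring
  have hfq : u < f q := hfU q hqU
  have hbne : 0 < b := by
    rcases lt_trichotomy b 0 with hblt | hbeq | hbgt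
    · exfalso
      set s := (f q - u) / (-b) + 1 with hs
      have hspos : 0 < s := by
        have h1 : 0 < f q - u := by linarith
        have h2 : 0 < -b := by linarith
        positivity
      have hmem : q + s • ed n ∈ Krestr K (2*ε) := U_upward hn hqU hspos.le
      have hthis := hfU _ hmem
      rw [map_add] at hthis
      have hsm : f (s • ed n) = s * b := by
        rw [hb]; exact f.map_smul s (ed n)
      rw [hsm] at hthis
      have hb0 : b ≠ 0 := ne_of_lt hblt
      have hx : (f q - u) / (-b) * (-b) = f q - u := div_mul_cancel₀ _ (neg_ne_zero.2 hb0)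
      have hAb : (f q - u) / (-b) * b = -(f q - u) := by linear_combination (-1 : ℝ) * hx
      have hcalc : f q + s * b = u + b := by
        rw [hs, add_mul, one_mul, hAb]
        ring
      rw [hcalc] at hthis
      linarith
    · exfalso
      have hqp : f q = f p₀ := by
        rw [hq_p₀, map_add]
        have hsm : f (δ • ed n) = δ * b := by
          rw [hb]; exact f.map_smul δ (ed n)
        rw [hsm, hbeq, mul_zero, add_zero]
      linarith
    · exact hbgt
  refine ⟨(-b⁻¹) • vproj n v, ?_⟩
  have hsplit : ∀ x, f x = ⟪vproj n v, vproj n x⟫ + b * x (Fin.last n) := by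
    intro x
    rw [← hvf x, inner_split]
    congr 1
    rw [hb, ← hvf (ed n), inner_ed_right]
  have hGle : Gfn n K ε ((-b⁻¹) • vproj n v) ≤ -u/b := by
    apply csSup_le (Gset_nonempty hK hne hε _)
    rintro val ⟨z, hz, rfl⟩
    have h1 : u < ⟪vproj n v, vproj n z⟫ + b * z (Fin.last n) := by
      rw [← hsplit]; exact hfU z hz
    show ⟪(-b⁻¹) • vproj n v, vproj n z⟫ - z (Fin.last n) ≤ -u/b
    have h2 : ⟪(-b⁻¹) • vproj n v, vproj n z⟫ = -b⁻¹ * ⟪vproj n v, vproj n z⟫ :=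
      real_inner_smul_left _ _ _
    rw [h2]
    have hb' : b ≠ 0 := ne_of_gt hbne
    calc -b⁻¹ * ⟪vproj n v, vproj n z⟫ - z (Fin.last n)
        = -((⟪vproj n v, vproj n z⟫ + b * z (Fin.last n))/b) := by field_simp; ring
      _ ≤ -(u/b) := neg_le_neg ((div_le_div_iff_of_pos_right hbne).2 h1.le)
      _ = -u/b := (neg_div _ _).symm
  have hplane : -u/b < plane n q ((-b⁻¹) • vproj n v) + δ := by
    have h1 : ⟪vproj n v, vproj n p₀⟫ + b * p₀ (Fin.last n) < u := by
      rw [← hsplit]; exact hfp₀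
    have hp₀proj : vproj n p₀ = w := vproj_vlift _ _
    have hp₀last : p₀ (Fin.last n) = fK K w - δ := vlift_last _ _
    rw [hp₀proj, hp₀last] at h1
    have h2 : plane n q ((-b⁻¹) • vproj n v) = -b⁻¹ * ⟪vproj n v, w⟫ - fK K w := by
      simp only [plane, hqlast]
      congr 1
      rw [real_inner_smul_right, hqproj, real_inner_comm]
    rw [h2]
    have hb' : b ≠ 0 := ne_of_gt hbne
    calc -u/b = -(u/b) := neg_div _ _
      _ < -((⟪vproj n v, w⟫ + b * (fK K w - δ))/b) :=
          neg_lt_neg ((div_lt_div_iff_of_pos_right hbne).2 h1)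
      _ = -b⁻¹ * ⟪vproj n v, w⟫ - fK K w + δ := by field_simp; ring
  calc Gfn n K ε ((-b⁻¹) • vproj n v) ≤ -u/b := hGle
    _ ≤ plane n q ((-b⁻¹) • vproj n v) + δ := le_of_lt hplane

end StabAux
namespace StabAux

variable {n : ℕ} {K : Set (EuclideanSpace ℝ (Fin (n+1)))} {ε : ℝ}
variable (hK : IsCompact K) (hne : K.Nonempty) (hconv : Convex ℝ K) (hε : 0 < ε)
  (hcube : ∀ x ∈ K, ∀ i, |x i| ≤ 1 - 2*ε)

lemma homothety_apply' {m : ℕ} (c : EuclideanSpace ℝ (Fin m)) (r : ℝ)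
    (z : EuclideanSpace ℝ (Fin m)) :
    AffineMap.homothety c r z = r • (z - c) + c := by
  rw [AffineMap.homothety_apply]
  rfl

lemma homothety_image_eq_preimage {m : ℕ} (c : EuclideanSpace ℝ (Fin m)) (S : Set (EuclideanSpace ℝ (Fin m))) :
    AffineMap.homothety c (1/12:ℝ) '' S = AffineMap.homothety c (12:ℝ) ⁻¹' S := by
  ext z
  constructor
  · rintro ⟨b, hb, rfl⟩
    show AffineMap.homothety c (12:ℝ) (AffineMap.homothety c (1/12:ℝ) b) ∈ S
    rw [homothety_apply', homothety_apply']
    have : (12:ℝ) • ((1/12:ℝ) • (b - c) + c - c) + c = b := by module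
    rwa [this]
  · intro hz
    refine ⟨AffineMap.homothety c (12:ℝ) z, hz, ?_⟩
    rw [homothety_apply', homothety_apply']
    module

lemma continuous_homothety {m : ℕ} (c : EuclideanSpace ℝ (Fin m)) (r : ℝ) :
    Continuous (AffineMap.homothety c r) := by
  have : ⇑(AffineMap.homothety c r) = fun z => r • (z - c) + c :=
    funext fun z => homothety_apply' c r z
  rw [this]
  exact (((continuous_id.sub continuous_const).const_smul r).add continuous_const)

lemma cap_closed (q : EuclideanSpace ℝ (Fin (n+1))) (c : ℝ) :
    IsClosed (Udual (Krestr K (2*ε)) ∩ {y | hgt n q y ≤ c}) := by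
  refine Udual_closed.inter (isClosed_le ?_ continuous_const)
  exact continuous_last.sub ((Continuous.inner continuous_const continuous_vproj).sub
    continuous_const)

lemma cap_convex (q : EuclideanSpace ℝ (Fin (n+1))) (c : ℝ) :
    Convex ℝ (Udual (Krestr K (2*ε)) ∩ {y | hgt n q y ≤ c}) := by
  refine Udual_convex.inter ?_
  intro x hx y hy a b ha hb hab
  show hgt n q (a • x + b • y) ≤ c
  rw [hgt_lincomb q x y a b hab]
  calc a * hgt n q x + b * hgt n q y ≤ a * c + b * c := by
        have hxc := hx; have hyc := hy
        gcongr <;> assumption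
    _ = c := by rw [← add_mul, hab, one_mul]

include hK hne hconv hε hcube in
lemma cap_volume_lower (hn : 1 ≤ n) {q : EuclideanSpace ℝ (Fin (n+1))}
    (hq : q ∈ lowerBdry K ε) {t : ℝ} (ht : 0 < t)
    (hvol : ENNReal.ofReal t ≤ volume (vproj n '' (Udual (Krestr K (2*ε)) ∩
      {y : EuclideanSpace ℝ (Fin (n+1)) |
        y (Fin.last n) = ⟪vproj n q, vproj n y⟫ - q (Fin.last n) + ε}))) :
    ENNReal.ofReal ((1/12:ℝ)^n * t * (ε/24))
      ≤ volume (Udual (Krestr K (2*ε)) ∩ {y | hgt n q y ≤ ε/6}) := by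
  have hqU : q ∈ Krestr K (2*ε) := (lowerBdry_facts hK hne hε hq).2.2
  obtain ⟨w₀, hw₀⟩ := exists_near_tangent hK hne hconv hε hcube hn hq
    (δ := ε/100) (by positivity)
  set y₀ := vlift n w₀ (Gfn n K ε w₀) with hy₀def
  have hy₀V : y₀ ∈ Udual (Krestr K (2*ε)) := graph_mem_Udual hK hne hε hcube w₀
  have hy₀h : hgt n q y₀ ≤ ε/100 := by
    simp only [hgt, hy₀def, vproj_vlift, vlift_last]
    simp only [plane] at hw₀ ⊢
    linarith
  have hy₀nn : 0 ≤ hgt n q y₀ := hgt_nonneg hqU hy₀V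
  set B := vproj n '' (Udual (Krestr K (2*ε)) ∩
    {y : EuclideanSpace ℝ (Fin (n+1)) |
      y (Fin.last n) = ⟪vproj n q, vproj n y⟫ - q (Fin.last n) + ε}) with hBdef
  set Bc := closure B with hBcdef
  have hBcvol : ENNReal.ofReal t ≤ volume Bc :=
    le_trans hvol (measure_mono subset_closure)
  set Lam := fun w : EuclideanSpace ℝ (Fin n) => vlift n w (plane n q w + ε) with hLam
  have hLamCont : Continuous Lam := by
    have hcomp : Lam = (fun p : (EuclideanSpace ℝ (Fin n)) × ℝ => vlift n p.1 p.2)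
        ∘ (fun w => (w, plane n q w + ε)) := rfl
    rw [hcomp]
    refine continuous_vlift2.comp (continuous_id.prodMk ?_)
    exact ((Continuous.inner continuous_const continuous_id).sub continuous_const).add
      continuous_const
  have hLamB : ∀ b ∈ B, Lam b ∈ Udual (Krestr K (2*ε)) := by
    rintro b ⟨y, ⟨hyV, hyE⟩, rfl⟩
    have hLv : Lam (vproj n y) = y := by
      have hpl : plane n q (vproj n y) + ε = y (Fin.last n) := by
        simp only [Set.mem_setOf_eq] at hyE
        simp only [plane]
        linarith
      show vlift n (vproj n y) (plane n q (vproj n y) + ε) = y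
      rw [hpl, vlift_eta]
    rw [hLv]
    exact hyV
  have hLamBc : ∀ b ∈ Bc, Lam b ∈ Udual (Krestr K (2*ε)) := by
    intro b hb
    have h1 : Lam b ∈ Lam '' closure B := Set.mem_image_of_mem _ hb
    have h2 : Lam '' closure B ⊆ closure (Lam '' B) := image_closure_subset_closure_image hLamCont
    have h3 : closure (Lam '' B) ⊆ closure (Udual (Krestr K (2*ε))) := by
      apply closure_mono
      rintro z ⟨b', hb', rfl⟩
      exact hLamB b' hb'
    have h4 := h3 (h2 h1)
    rwa [Udual_closed.closure_eq] at h4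
  set B' := AffineMap.homothety w₀ (1/12:ℝ) '' Bc with hB'def
  have hB'meas : MeasurableSet B' := by
    rw [hB'def, homothety_image_eq_preimage]
    exact (isClosed_closure.preimage (continuous_homothety w₀ 12)).measurableSet
  have hB'vol : volume B' = ENNReal.ofReal ((1/12:ℝ)^n) * volume Bc := by
    rw [hB'def, Measure.addHaar_image_homothety]
    congr 2
    rw [abs_of_nonneg (by positivity)]
    congr 1
    exact finrank_euclideanSpace_fin
  set a₁ := ε/100 + ε/12 with ha₁
  set a₂ := ε/6 with ha₂
  set S := {y : EuclideanSpace ℝ (Fin (n+1)) | vproj n y ∈ B' ∧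
    y (Fin.last n) ∈ Set.Icc (plane n q (vproj n y) + a₁) (plane n q (vproj n y) + a₂)}
    with hSdef
  have hplaneCont : Continuous (fun y : EuclideanSpace ℝ (Fin (n+1)) =>
      plane n q (vproj n y)) :=
    (Continuous.inner continuous_const continuous_vproj).sub continuous_const
  have hSmeas : MeasurableSet S := by
    refine MeasurableSet.inter (continuous_vproj.measurable hB'meas) ?_
    refine MeasurableSet.inter ?_ ?_
    · exact measurableSet_le ((hplaneCont.add continuous_const).measurable)
        continuous_last.measurable
    · exact measurableSet_le continuous_last.measurable
        ((hplaneCont.add continuous_const).measurable)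
  have hsub : S ⊆ Udual (Krestr K (2*ε)) ∩ {y | hgt n q y ≤ ε/6} := by
    rintro y ⟨hyB', hyIcc⟩
    obtain ⟨b, hb, hbw⟩ := hyB'
    set w := vproj n y with hwdef
    set yb := Lam b with hybdef
    have hybV : yb ∈ Udual (Krestr K (2*ε)) := hLamBc b hb
    set p := (11/12:ℝ) • y₀ + (1/12:ℝ) • yb with hpdef
    have hpV : p ∈ Udual (Krestr K (2*ε)) :=
      Udual_convex hy₀V hybV (by norm_num) (by norm_num) (by norm_num)
    have hvp : vproj n p = w := by
      have hprojLam : vproj n (Lam b) = b := by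
        show vproj n (vlift n b (plane n q b + ε)) = b
        exact vproj_vlift _ _
      have hprojy₀ : vproj n y₀ = w₀ := vproj_vlift _ _
      rw [hpdef, vproj_add, vproj_smul, vproj_smul, hybdef, hprojLam, hprojy₀, ← hbw,
        homothety_apply']
      module
    have hgtyb : hgt n q yb = ε := by
      rw [hybdef, hLam]
      simp only [hgt, vproj_vlift, vlift_last]
      ring
    have hgtp : hgt n q p = (11/12:ℝ) * hgt n q y₀ + (1/12:ℝ) * hgt n q yb := by
      rw [hpdef]
      exact hgt_lincomb q y₀ yb _ _ (by norm_num)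
    have hgtp_le : hgt n q p ≤ a₁ := by
      rw [hgtp, hgtyb, ha₁]
      nlinarith [hy₀h, hy₀nn]
    have hgtp_nn : 0 ≤ hgt n q p := hgt_nonneg hqU hpV
    -- y = p + (y last - p last) • ed
    have hplast : p (Fin.last n) = plane n q w + hgt n q p := by
      simp only [hgt, hvp]; ring
    have hyp : y = p + (y (Fin.last n) - p (Fin.last n)) • ed n := by
      have h1 : p = vlift n w (p (Fin.last n)) := by
        rw [← hvp, vlift_eta]
      have h2 := vlift_add_ed w (p (Fin.last n)) (y (Fin.last n) - p (Fin.last n))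
      rw [show p (Fin.last n) + (y (Fin.last n) - p (Fin.last n)) = y (Fin.last n) by ring] at h2
      calc y = vlift n w (y (Fin.last n)) := by rw [hwdef, vlift_eta]
        _ = vlift n w (p (Fin.last n)) + (y (Fin.last n) - p (Fin.last n)) • ed n := h2.symm
        _ = p + (y (Fin.last n) - p (Fin.last n)) • ed n := by rw [← h1]
    have hdiff_nn : 0 ≤ y (Fin.last n) - p (Fin.last n) := by
      have := hyIcc.1
      rw [hplast]
      have : plane n q w + a₁ ≤ y (Fin.last n) := hyIcc.1
      linarith [hgtp_le]
    have hyV : y ∈ Udual (Krestr K (2*ε)) := by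
      rw [hyp]
      exact Udual_upward hpV hdiff_nn
    refine ⟨hyV, ?_⟩
    show hgt n q y ≤ ε/6
    have : hgt n q y = y (Fin.last n) - plane n q w := by simp only [hgt, hwdef]
    rw [this]
    have := hyIcc.2
    rw [ha₂] at this
    linarith
  have hSvol : volume S = ENNReal.ofReal (a₂ - a₁) * volume B' := by
    rw [volume_eq_fibers S hSmeas]
    have hfib : ∀ w, volume {s : ℝ | vlift n w s ∈ S}
        = B'.indicator (fun _ => ENNReal.ofReal (a₂ - a₁)) w := by
      intro w
      by_cases hw : w ∈ B'
      · rw [Set.indicator_of_mem hw]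
        have : {s : ℝ | vlift n w s ∈ S}
            = Set.Icc (plane n q w + a₁) (plane n q w + a₂) := by
          ext s
          simp only [hSdef, Set.mem_setOf_eq, vproj_vlift, vlift_last, Set.mem_Icc]
          constructor
          · exact fun h => h.2
          · exact fun h => ⟨hw, h⟩
        rw [this, Real.volume_Icc]
        congr 1
        ring
      · rw [Set.indicator_of_notMem hw]
        have : {s : ℝ | vlift n w s ∈ S} = ∅ := by
          ext s
          simp only [hSdef, Set.mem_setOf_eq, vproj_vlift, vlift_last,
            Set.mem_empty_iff_false, iff_false]
          exact fun h => hw h.1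
        rw [this]
        simp
    rw [lintegral_congr hfib, lintegral_indicator hB'meas, setLIntegral_const, mul_comm]
  calc ENNReal.ofReal ((1/12:ℝ)^n * t * (ε/24))
      ≤ ENNReal.ofReal ((a₂ - a₁) * ((1/12:ℝ)^n * t)) := by
        apply ENNReal.ofReal_le_ofReal
        have h1 : ε/24 ≤ a₂ - a₁ := by rw [ha₁, ha₂]; linarith
        have h2 : (0:ℝ) ≤ (1/12:ℝ)^n * t := by positivity
        nlinarith [h2, h1, pow_pos (show (0:ℝ) < 1/12 by norm_num) n, ht]
    _ = ENNReal.ofReal (a₂ - a₁) * (ENNReal.ofReal ((1/12:ℝ)^n) * ENNReal.ofReal t) := by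
        rw [← ENNReal.ofReal_mul (by positivity), ← ENNReal.ofReal_mul (by rw [ha₁, ha₂]; linarith)]
    _ ≤ ENNReal.ofReal (a₂ - a₁) * (ENNReal.ofReal ((1/12:ℝ)^n) * volume Bc) := by
        gcongr
    _ = ENNReal.ofReal (a₂ - a₁) * volume B' := by rw [hB'vol]
    _ = volume S := hSvol.symm
    _ ≤ volume (Udual (Krestr K (2*ε)) ∩ {y | hgt n q y ≤ ε/6}) := measure_mono hsub

end StabAux
namespace StabAux

variable {n : ℕ} {K : Set (EuclideanSpace ℝ (Fin (n+1)))} {ε : ℝ}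

/-- The dimensional constant in the volume lower bound for half Macbeath regions. -/
def gamma0 (n : ℕ) : ℝ := (1/2:ℝ)^(n+1) * ((1/2:ℝ)^(n+2) * ((1/12:ℝ)^n / 24))

lemma gamma0_pos (n : ℕ) : 0 < gamma0 n := by
  unfold gamma0
  positivity

lemma Mreg_closed' {C : Set (EuclideanSpace ℝ (Fin (n+1)))} (hC : IsClosed C)
    (x : EuclideanSpace ℝ (Fin (n+1))) : IsClosed (Mreg C x) := by
  refine hC.inter (hC.preimage ?_)
  exact continuous_const.sub continuous_id

lemma MregHalf_closed' {C : Set (EuclideanSpace ℝ (Fin (n+1)))} (hC : IsClosed C)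
    (x : EuclideanSpace ℝ (Fin (n+1))) : IsClosed (MregHalf C x) := by
  have : MregHalf C x = (fun z => (2:ℝ) • z - x) ⁻¹' (Mreg C x) := rfl
  rw [this]
  exact (Mreg_closed' hC x).preimage ((continuous_id.const_smul (2:ℝ)).sub continuous_const)

variable (hK : IsCompact K) (hne : K.Nonempty) (hconv : Convex ℝ K) (hε : 0 < ε)
  (hcube : ∀ x ∈ K, ∀ i, |x i| ≤ 1 - 2*ε)

/-- The property required of selected points. -/
def GoodPt (n : ℕ) (K : Set (EuclideanSpace ℝ (Fin (n+1)))) (ε t : ℝ)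
    (x : EuclideanSpace ℝ (Fin (n+1))) : Prop :=
  x ∈ Udual (Krestr K (2*ε)) ∧
  MregHalf (Udual (Krestr K (2*ε))) x ⊆ Slab n K ε ∧
  ENNReal.ofReal (gamma0 n * t * ε) ≤ volume (MregHalf (Udual (Krestr K (2*ε))) x)

def GoodFam (n : ℕ) (K : Set (EuclideanSpace ℝ (Fin (n+1)))) (ε t : ℝ)
    (S : Finset (EuclideanSpace ℝ (Fin (n+1)))) : Prop :=
  (∀ x ∈ S, GoodPt n K ε t x) ∧
  (S : Set (EuclideanSpace ℝ (Fin (n+1)))).PairwiseDisjoint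
    (fun x => MregHalf (Udual (Krestr K (2*ε))) x)

include hK hne hε hcube in
lemma goodFam_card_bound {t : ℝ} (ht : 0 < t)
    {S : Finset (EuclideanSpace ℝ (Fin (n+1)))} (hS : GoodFam n K ε t S) :
    (S.card : ℝ) * (gamma0 n * t * ε) ≤ ε * 4^n := by
  have hmeas : ∀ x ∈ S, MeasurableSet (MregHalf (Udual (Krestr K (2*ε))) x) :=
    fun x _ => (MregHalf_closed' Udual_closed x).measurableSet
  have hsum : ∑ x ∈ S, volume (MregHalf (Udual (Krestr K (2*ε))) x)
      = volume (⋃ x ∈ S, MregHalf (Udual (Krestr K (2*ε))) x) :=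
    (measure_biUnion_finset hS.2 hmeas).symm
  have hsub : (⋃ x ∈ S, MregHalf (Udual (Krestr K (2*ε))) x) ⊆ Slab n K ε :=
    Set.iUnion₂_subset fun x hx => (hS.1 x hx).2.1
  have hbound : (S.card : ℝ≥0∞) * ENNReal.ofReal (gamma0 n * t * ε)
      ≤ ENNReal.ofReal (ε * 4^n) := by
    calc (S.card : ℝ≥0∞) * ENNReal.ofReal (gamma0 n * t * ε)
        = S.card • ENNReal.ofReal (gamma0 n * t * ε) := by rw [nsmul_eq_mul]
      _ ≤ ∑ x ∈ S, volume (MregHalf (Udual (Krestr K (2*ε))) x) :=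
          Finset.card_nsmul_le_sum S _ _ (fun x hx => (hS.1 x hx).2.2)
      _ = volume (⋃ x ∈ S, MregHalf (Udual (Krestr K (2*ε))) x) := hsum
      _ ≤ volume (Slab n K ε) := measure_mono hsub
      _ ≤ ENNReal.ofReal ε * (ENNReal.ofReal 4)^n := Slab_volume hK hne hε hcube
      _ = ENNReal.ofReal (ε * 4^n) := by
          rw [ENNReal.ofReal_mul hε.le]
          congr 1
          rw [← ENNReal.ofReal_pow (by norm_num)]
  have h2 : ENNReal.ofReal ((S.card : ℝ) * (gamma0 n * t * ε)) ≤ ENNReal.ofReal (ε * 4^n) := by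
    rw [ENNReal.ofReal_mul (by positivity), ENNReal.ofReal_natCast]
    exact hbound
  rw [ENNReal.ofReal_le_ofReal_iff (by positivity)] at h2
  exact h2

include hK hne hconv hε hcube in
lemma exists_stabbing_family (hn : 1 ≤ n) {t : ℝ} (ht : 0 < t) :
    ∃ S : Finset (EuclideanSpace ℝ (Fin (n+1))),
      (∀ x ∈ S, x ∈ Udual (Krestr K (2*ε))) ∧
      ((S.card : ℝ) ≤ (4^n / gamma0 n) / t) ∧
      (∀ q ∈ lowerBdry K ε,
        ENNReal.ofReal t ≤ volume (vproj n '' (Udual (Krestr K (2*ε)) ∩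
          {y : EuclideanSpace ℝ (Fin (n+1)) |
            y (Fin.last n) = ⟪vproj n q, vproj n y⟫ - q (Fin.last n) + ε})) →
        ∃ x ∈ S, hgt n q x ≤ ε) := by
  classical
  have hγ := gamma0_pos n
  -- maximal good family
  set κ : Set ℕ := {N | ∃ S : Finset (EuclideanSpace ℝ (Fin (n+1))),
    GoodFam n K ε t S ∧ S.card = N} with hκ
  have hκne : κ.Nonempty := ⟨0, ∅, ⟨by simp, by simp⟩, rfl⟩
  have hκbdd : BddAbove κ := by
    refine ⟨Nat.floor ((ε * 4^n) / (gamma0 n * t * ε)), ?_⟩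
    rintro N ⟨S, hS, rfl⟩
    apply Nat.le_floor
    have := goodFam_card_bound hK hne hε hcube ht hS
    rw [le_div_iff₀ (by positivity)]
    exact this
  obtain ⟨S, hSGood, hScard⟩ := Nat.sSup_mem hκne hκbdd
  have hmax : ∀ S' : Finset (EuclideanSpace ℝ (Fin (n+1))),
      GoodFam n K ε t S' → S'.card ≤ S.card := by
    intro S' hS'
    rw [hScard]
    exact le_csSup hκbdd ⟨S', hS', rfl⟩
  refine ⟨S, fun x hx => (hSGood.1 x hx).1, ?_, ?_⟩
  · have h1 := goodFam_card_bound hK hne hε hcube ht hSGood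
    rw [div_div, le_div_iff₀ (by positivity)]
    have h2 : (S.card : ℝ) * (gamma0 n * t) * ε ≤ 4^n * ε := by
      calc (S.card : ℝ) * (gamma0 n * t) * ε = (S.card : ℝ) * (gamma0 n * t * ε) := by ring
        _ ≤ ε * 4^n := h1
        _ = 4^n * ε := by ring
    exact le_of_mul_le_mul_right h2 hε
  · intro q hq hvol
    by_contra hcon
    push_neg at hcon
    -- the cap body T
    set T := Udual (Krestr K (2*ε)) ∩ {y | hgt n q y ≤ ε/6} with hT
    have hqU : q ∈ Krestr K (2*ε) := (lowerBdry_facts hK hne hε hq).2.2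
    have hTclosed : IsClosed T := cap_closed q (ε/6)
    have hTconv : Convex ℝ T := cap_convex q (ε/6)
    have hTlow := cap_volume_lower hK hne hconv hε hcube hn hq ht hvol
    have hT0 : volume T ≠ 0 := by
      intro h0
      rw [← hT] at hTlow
      rw [h0, nonpos_iff_eq_zero, ENNReal.ofReal_eq_zero] at hTlow
      have hpos : (0:ℝ) < (1/12:ℝ)^n * t * (ε/24) := by positivity
      linarith
    have hTsubSlab : T ⊆ Slab n K ε := by
      intro y hy
      refine cap_subset_Slab hK hne hε hcube hq ⟨hy.1, ?_⟩
      show hgt n q y ≤ ε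
      have := hy.2
      simp only [Set.mem_setOf_eq] at this
      linarith
    have hTfin : volume T ≠ ⊤ := by
      intro htop
      have h1 : volume T ≤ volume (Slab n K ε) := measure_mono hTsubSlab
      have h2 := Slab_volume hK hne hε hcube
      rw [htop] at h1
      have h3 : (⊤ : ℝ≥0∞) ≤ ENNReal.ofReal ε * (ENNReal.ofReal 4)^n := le_trans h1 h2
      have h4 : ENNReal.ofReal ε * (ENNReal.ofReal 4)^n ≠ ⊤ :=
        ENNReal.mul_ne_top ENNReal.ofReal_ne_top (ENNReal.pow_ne_top ENNReal.ofReal_ne_top)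
      exact h4 (top_le_iff.1 h3)
    obtain ⟨x₀, hx₀T, hx₀avg⟩ := exists_good_center T hTclosed hTconv hT0 hTfin
    have hx₀V : x₀ ∈ Udual (Krestr K (2*ε)) := hx₀T.1
    have hx₀hgt : hgt n q x₀ ≤ ε/6 := hx₀T.2
    -- Good point
    have hsubM : T ∩ {y | (2:ℝ) • x₀ - y ∈ T} ⊆ Mreg (Udual (Krestr K (2*ε))) x₀ := by
      rintro z ⟨hz1, hz2⟩
      exact ⟨hz1.1, (hz2 : _ ∈ T).1⟩
    have hgood : GoodPt n K ε t x₀ := by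
      refine ⟨hx₀V, ?_, ?_⟩
      · -- half region inside slab
        intro z hz
        have hzM : z ∈ Mreg (Udual (Krestr K (2*ε))) x₀ :=
          MregHalf_subset_Mreg Udual_convex hx₀V hz
        obtain ⟨hzV, hzrefl⟩ := hzM
        have hu : (2:ℝ) • x₀ - z ∈ Udual (Krestr K (2*ε)) := hzrefl
        have hid : z = (2:ℝ) • x₀ + (-1:ℝ) • ((2:ℝ) • x₀ - z) := by module
        have hhz : hgt n q z = 2 * hgt n q x₀ - hgt n q ((2:ℝ) • x₀ - z) := by
          calc hgt n q z = hgt n q ((2:ℝ) • x₀ + (-1:ℝ) • ((2:ℝ) • x₀ - z)) := by rw [← hid]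
            _ = 2 * hgt n q x₀ + (-1) * hgt n q ((2:ℝ) • x₀ - z) :=
                hgt_lincomb q _ _ 2 (-1) (by norm_num)
            _ = 2 * hgt n q x₀ - hgt n q ((2:ℝ) • x₀ - z) := by ring
        have hunn : 0 ≤ hgt n q ((2:ℝ) • x₀ - z) := hgt_nonneg hqU hu
        refine cap_subset_Slab hK hne hε hcube hq ⟨hzV, ?_⟩
        show hgt n q z ≤ ε
        rw [hhz]
        linarith
      · -- volume lower bound
        calc ENNReal.ofReal (gamma0 n * t * ε)
            = ENNReal.ofReal ((1/2:ℝ)^(n+1)) * (ENNReal.ofReal ((1/2:ℝ)^(n+1+1)) *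
              ENNReal.ofReal ((1/12:ℝ)^n * t * (ε/24))) := by
              rw [← ENNReal.ofReal_mul (by positivity), ← ENNReal.ofReal_mul (by positivity)]
              congr 1
              unfold gamma0
              ring
          _ ≤ ENNReal.ofReal ((1/2:ℝ)^(n+1)) * (ENNReal.ofReal ((1/2:ℝ)^(n+1+1)) *
              volume T) := mul_le_mul_right (mul_le_mul_right hTlow _) _
          _ ≤ ENNReal.ofReal ((1/2:ℝ)^(n+1)) *
              volume (T ∩ {y | (2:ℝ) • x₀ - y ∈ T}) := mul_le_mul_right hx₀avg _
          _ ≤ ENNReal.ofReal ((1/2:ℝ)^(n+1)) *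
              volume (Mreg (Udual (Krestr K (2*ε))) x₀) :=
              mul_le_mul_right (measure_mono hsubM) _
          _ = volume (MregHalf (Udual (Krestr K (2*ε))) x₀) :=
              (volume_MregHalf _ _).symm
    -- disjointness from members of S
    have hx₀new : x₀ ∉ S := by
      intro hmem
      have := hcon x₀ hmem
      linarith
    have hdisj : ∀ x ∈ S, Disjoint (MregHalf (Udual (Krestr K (2*ε))) x)
        (MregHalf (Udual (Krestr K (2*ε))) x₀) := by
      intro x hx
      rw [Set.disjoint_iff_inter_eq_empty]
      by_contra hinter
      have hnon : (MregHalf (Udual (Krestr K (2*ε))) x ∩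
          MregHalf (Udual (Krestr K (2*ε))) x₀).Nonempty :=
        Set.nonempty_iff_ne_empty.2 hinter
      have hxV : x ∈ Udual (Krestr K (2*ε)) := (hSGood.1 x hx).1
      have hmac := macbeath Udual_convex hxV hx₀V hnon
      set m := (1/5:ℝ) • x + (4/5:ℝ) • x₀ with hm
      obtain ⟨hmV, hmrefl⟩ := hmac
      have hmu : (2:ℝ) • x₀ - m ∈ Udual (Krestr K (2*ε)) := hmrefl
      have hxid : x = (5:ℝ) • m + (-4:ℝ) • x₀ := by rw [hm]; module
      have hhm : hgt n q m = 2 * hgt n q x₀ - hgt n q ((2:ℝ) • x₀ - m) := by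
        have hid2 : m = (2:ℝ) • x₀ + (-1:ℝ) • ((2:ℝ) • x₀ - m) := by module
        calc hgt n q m = hgt n q ((2:ℝ) • x₀ + (-1:ℝ) • ((2:ℝ) • x₀ - m)) := by rw [← hid2]
          _ = 2 * hgt n q x₀ + (-1) * hgt n q ((2:ℝ) • x₀ - m) :=
              hgt_lincomb q _ _ 2 (-1) (by norm_num)
          _ = _ := by ring
      have hhx : hgt n q x = 5 * hgt n q m + (-4) * hgt n q x₀ := by
        calc hgt n q x = hgt n q ((5:ℝ) • m + (-4:ℝ) • x₀) := by rw [← hxid]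
          _ = _ := hgt_lincomb q _ _ 5 (-4) (by norm_num)
      have hx₀nn : 0 ≤ hgt n q x₀ := hgt_nonneg hqU hx₀V
      have hmnn : 0 ≤ hgt n q ((2:ℝ) • x₀ - m) := hgt_nonneg hqU hmu
      have hfin2 : hgt n q x ≤ ε := by
        rw [hhx, hhm]
        linarith
      have := hcon x hx
      linarith
    have hGood' : GoodFam n K ε t (insert x₀ S) := by
      constructor
      · intro x hx
        rcases Finset.mem_insert.1 hx with rfl | hxS
        · exact hgood
        · exact hSGood.1 x hxS
      · intro a ha b hb hab
        simp only [Finset.coe_insert, Set.mem_insert_iff] at ha hb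
        rcases ha with rfl | haS
        · rcases hb with rfl | hbS
          · exact absurd rfl hab
          · exact (hdisj b hbS).symm
        · rcases hb with rfl | hbS
          · exact hdisj a haS
          · exact hSGood.2 haS hbS hab
    have := hmax _ hGood'
    rw [Finset.card_insert_of_notMem hx₀new] at this
    omega

end StabAux
/-- stabbing large caps in the dual: there is `c_d > 0` such that, for a
convex body `K ⊆ [−(1−2ε), 1−2ε]^d`, `U = K^{(2ε)}` and any `t > 0`, there is a set
`P ⊆ frontier U*` of at most `c_d / t` points stabbing every useful `ε`-cap of `U*`
whose base has projected area at least `t`. -/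
theorem stab_large_caps_in_dual (n : ℕ) (hn : 1 ≤ n) :
    ∃ c : ℝ, 0 < c ∧
      ∀ (K : Set (EuclideanSpace ℝ (Fin (n + 1)))),
        IsCompact K → Convex ℝ K → (interior K).Nonempty →
        ∀ ε : ℝ, 0 < ε →
        (∀ x ∈ K, ∀ i : Fin (n + 1), |x i| ≤ 1 - 2 * ε) →
        ∀ t : ℝ, 0 < t →
        ∃ P : Finset (EuclideanSpace ℝ (Fin (n + 1))),
          (P : Set (EuclideanSpace ℝ (Fin (n + 1)))) ⊆ frontier (Udual (Krestr K (2 * ε))) ∧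
          (P.card : ℝ) ≤ c / t ∧
          (∀ q ∈ lowerBdry K ε, ∀ u : EuclideanSpace ℝ (Fin (n + 1)), ‖u‖ = 1 →
            (∀ x ∈ SK K, ⟪u, x - q⟫ ≤ 0) →
            ENNReal.ofReal t ≤
              volume (vproj n ''
                (Udual (Krestr K (2 * ε)) ∩
                  {y : EuclideanSpace ℝ (Fin (n + 1)) |
                    y (Fin.last n) = ⟪vproj n q, vproj n y⟫ - q (Fin.last n) + ε})) →
            ∃ y ∈ P, y (Fin.last n) ≤ ⟪vproj n q, vproj n y⟫ - q (Fin.last n) + ε) := by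
  classical
  refine ⟨4^n / StabAux.gamma0 n, div_pos (by positivity) (StabAux.gamma0_pos n), ?_⟩
  intro K hK hconv hint ε hε hcube t ht
  have hne : K.Nonempty := hint.mono interior_subset
  obtain ⟨S, hSV, hScard, hSstab⟩ :=
    StabAux.exists_stabbing_family hK hne hconv hε hcube hn ht
  refine ⟨S.image (fun x => vlift n (vproj n x) (StabAux.Gfn n K ε (vproj n x))), ?_, ?_, ?_⟩
  · intro y hy
    simp only [Finset.coe_image, Set.mem_image, Finset.mem_coe] at hy
    obtain ⟨x, _, rfl⟩ := hy
    exact StabAux.graph_mem_frontier hK hne hε hcube (vproj n x)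
  · calc ((S.image (fun x => vlift n (vproj n x) (StabAux.Gfn n K ε (vproj n x)))).card : ℝ)
        ≤ (S.card : ℝ) := by exact_mod_cast Finset.card_image_le
      _ ≤ (4^n / StabAux.gamma0 n) / t := hScard
  · intro q hq u _ _ hvol
    obtain ⟨x, hxS, hxhgt⟩ := hSstab q hq hvol
    refine ⟨vlift n (vproj n x) (StabAux.Gfn n K ε (vproj n x)),
      Finset.mem_image_of_mem _ hxS, ?_⟩
    rw [StabAux.vlift_last, StabAux.vproj_vlift]
    have h1 : StabAux.Gfn n K ε (vproj n x) ≤ x (Fin.last n) :=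
      StabAux.Gfn_le_of_mem hK hne hε (hSV x hxS)
    simp only [StabAux.hgt, StabAux.plane] at hxhgt
    linarith

end
end
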